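/- arXiv:1707.06904 — 4 statements merged into one kernel-verified Lean document; each statement's English description precedes it below -/
import Mathlib

section
/- Under Assumption A1, n^{-1} Σ_{t=1}^{n} u_t⁴ converges in probability, as n → ∞, to E[ε_1⁴] · ∫_0^1 g(r)⁴ dr. -/
open MeasureTheory ProbabilityTheory Filter

open Topology

lemma bdd_of_lip (w : ℝ → ℝ) (K : NNReal) (hw : LipschitzOnWith K w (Set.Ioc 0 1)) :
    ∀ x ∈ Set.Ioc (0:ℝ) 1, ‖w x‖ ≤ |w 1| + K := by
  intro x hx
  have h1 : (1:ℝ) ∈ Set.Ioc (0:ℝ) 1 := by constructor <;> norm_num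
  have := hw.dist_le_mul x hx 1 h1
  have hd : dist x 1 ≤ 1 := by
    rw [Real.dist_eq]
    rcases hx with ⟨hx0, hx1⟩
    rw [abs_le]; constructor <;> linarith
  calc ‖w x‖ = |w x - w 1 + w 1| := by norm_num
    _ ≤ |w x - w 1| + |w 1| := abs_add_le _ _
    _ ≤ K * 1 + |w 1| := by
        refine add_le_add ?_ le_rfl
        calc |w x - w 1| = dist (w x) (w 1) := (Real.dist_eq _ _).symm
          _ ≤ K * dist x 1 := this
          _ ≤ K * 1 := by nlinarith [hd, K.coe_nonneg]
    _ = |w 1| + K := by ring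

lemma int_of_lip (w : ℝ → ℝ) (K : NNReal) (hw : LipschitzOnWith K w (Set.Ioc 0 1)) :
    IntegrableOn w (Set.Ioc (0:ℝ) 1) := by
  refine ⟨(hw.continuousOn.aestronglyMeasurable measurableSet_Ioc), ?_⟩
  apply HasFiniteIntegral.restrict_of_bounded (C := |w 1| + K)
  · simp
  · filter_upwards [ae_restrict_mem measurableSet_Ioc] with x hx
    exact bdd_of_lip w K hw x hx

-- Riemann sum lemma for Lipschitz functions on (0,1]
lemma riemann_lip (w : ℝ → ℝ) (K : NNReal) (hw : LipschitzOnWith K w (Set.Ioc 0 1)) :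
    Tendsto (fun n : ℕ => (n:ℝ)⁻¹ * ∑ i ∈ Finset.range n, w (((i:ℝ)+1)/n)) atTop
      (𝓝 (∫ r in Set.Ioc (0:ℝ) 1, w r)) := by
  have hInt := int_of_lip w K hw
  rw [← tendsto_sub_nhds_zero_iff]
  apply squeeze_zero_norm' (a := fun n : ℕ => (K:ℝ)/n)
  · filter_upwards [eventually_ge_atTop 1] with n hn
    have hn0 : (0:ℝ) < n := by exact_mod_cast hn
    -- pieces
    have hmem : ∀ i ∈ Finset.range n, Set.Ioc ((i:ℝ)/n) (((i:ℝ)+1)/n) ⊆ Set.Ioc (0:ℝ) 1 := by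
      intro i hi
      apply Set.Ioc_subset_Ioc
      · positivity
      · rw [div_le_one hn0]
        have : (i:ℝ) + 1 ≤ n := by
          have := Finset.mem_range.mp hi
          exact_mod_cast Nat.succ_le_of_lt this
        linarith
    -- decompose the integral
    have hsplit : (∫ r in Set.Ioc (0:ℝ) 1, w r)
        = ∑ i ∈ Finset.range n, ∫ r in Set.Ioc ((i:ℝ)/n) (((i:ℝ)+1)/n), w r := by
      have hadj : ∀ k < n, IntervalIntegrable w volume ((k:ℝ)/n) (((k:ℝ)+1)/n) := by
        intro k hk
        rw [intervalIntegrable_iff_integrableOn_Ioc_of_le (by gcongr <;> norm_num)]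
        exact hInt.mono_set (hmem k (Finset.mem_range.mpr hk))
      have := intervalIntegral.sum_integral_adjacent_intervals (a := fun i : ℕ => (i:ℝ)/n)
        (f := w) (n := n) (by intro k hk; simpa using hadj k hk)
      have this2 : ∑ k ∈ Finset.range n,
          ∫ x in ((k:ℝ)/n)..(((k:ℝ)+1)/n), w x = ∫ x in (0:ℝ)..1, w x := by
        have hnn : ((n:ℝ)) ≠ 0 := ne_of_gt hn0
        simpa [div_self hnn] using this
      rw [← intervalIntegral.integral_of_le zero_le_one, ← this2]
      apply Finset.sum_congr rfl
      intro i _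
      rw [intervalIntegral.integral_of_le (by gcongr <;> norm_num)]
    -- termwise estimate
    have hterm : ∀ i ∈ Finset.range n,
        ‖(n:ℝ)⁻¹ * w (((i:ℝ)+1)/n) - ∫ r in Set.Ioc ((i:ℝ)/n) (((i:ℝ)+1)/n), w r‖
          ≤ (K:ℝ)/n^2 := by
      intro i hi
      set a := (i:ℝ)/n with ha
      set b := ((i:ℝ)+1)/n with hb
      have hab : a ≤ b := by rw [ha, hb]; gcongr <;> norm_num
      have hvol : (volume (Set.Ioc a b)).toReal = (n:ℝ)⁻¹ := by
        rw [Real.volume_Ioc, ENNReal.toReal_ofReal (by linarith)]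
        rw [ha, hb]; field_simp; ring
      have hconst : (n:ℝ)⁻¹ * w b = ∫ _ in Set.Ioc a b, w b := by
        rw [setIntegral_const, measureReal_def, hvol]; simp [mul_comm]
      rw [hconst, ← integral_sub (integrable_const _)
        (hInt.mono_set (hmem i hi))]
      have hble : Set.Ioc a b ⊆ Set.Ioc (0:ℝ) 1 := hmem i hi
      have hablt : a < b := by
        rw [ha, hb]; apply (div_lt_div_iff₀ hn0 hn0).mpr; nlinarith
      have hbmem : b ∈ Set.Ioc (0:ℝ) 1 := hble ⟨hablt, le_rfl⟩
      have hmble : AEStronglyMeasurable (fun r => w b - w r)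
          (volume.restrict (Set.Ioc a b)) :=
        aestronglyMeasurable_const.sub
          ((hInt.mono_set hble).aestronglyMeasurable)
      have hbound : ∀ x ∈ Set.Ioc a b, ‖w b - w x‖ ≤ (K:ℝ)/n := ?_
      · have := norm_setIntegral_le_of_norm_le_const (μ := volume)
          (s := Set.Ioc a b) (C := (K:ℝ)/n)
          (by rw [Real.volume_Ioc]; exact ENNReal.ofReal_lt_top)
          (f := fun r => w b - w r) hbound
        calc ‖∫ r in Set.Ioc a b, (w b - w r)‖ ≤ (K:ℝ)/n * (volume (Set.Ioc a b)).toReal := this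
          _ = (K:ℝ)/n^2 := by rw [hvol]; ring
      · intro x hx
        have hxmem : x ∈ Set.Ioc (0:ℝ) 1 := hble hx
        have hdist := hw.dist_le_mul b hbmem x hxmem
        have hdxb : dist b x ≤ (n:ℝ)⁻¹ := by
          rw [Real.dist_eq, abs_le]
          have h1 : a < x := hx.1
          have h2 : x ≤ b := hx.2
          have h3 : b - a = (n:ℝ)⁻¹ := by rw [ha, hb]; field_simp; ring
          constructor <;> nlinarith
        calc ‖w b - w x‖ = dist (w b) (w x) := (Real.dist_eq _ _).symm
          _ ≤ K * dist b x := hdist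
          _ ≤ K * (n:ℝ)⁻¹ := by nlinarith [K.coe_nonneg]
          _ = (K:ℝ)/n := by ring
    -- combine
    calc ‖(n:ℝ)⁻¹ * ∑ i ∈ Finset.range n, w (((i:ℝ)+1)/n) - ∫ r in Set.Ioc (0:ℝ) 1, w r‖
        = ‖∑ i ∈ Finset.range n, ((n:ℝ)⁻¹ * w (((i:ℝ)+1)/n)
            - ∫ r in Set.Ioc ((i:ℝ)/n) (((i:ℝ)+1)/n), w r)‖ := by
          rw [Finset.sum_sub_distrib, ← Finset.mul_sum, ← hsplit]
      _ ≤ ∑ i ∈ Finset.range n, ‖(n:ℝ)⁻¹ * w (((i:ℝ)+1)/n)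
            - ∫ r in Set.Ioc ((i:ℝ)/n) (((i:ℝ)+1)/n), w r‖ := norm_sum_le _ _
      _ ≤ ∑ _i ∈ Finset.range n, (K:ℝ)/n^2 := Finset.sum_le_sum hterm
      _ = (K:ℝ)/n := by
          rw [Finset.sum_const, Finset.card_range, nsmul_eq_mul]
          field_simp
  · exact tendsto_const_nhds.div_atTop tendsto_natCast_atTop_atTop

lemma det_weighted (w : ℝ → ℝ) (K : NNReal) (hw : LipschitzOnWith K w (Set.Ioc 0 1))
    (Y : ℕ → ℝ) (m : ℝ)
    (hY : Tendsto (fun n : ℕ => (n:ℝ)⁻¹ * ∑ i ∈ Finset.range n, Y i) atTop (𝓝 m)) :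
    Tendsto (fun n : ℕ => (n:ℝ)⁻¹ * ∑ i ∈ Finset.range n, w (((i:ℝ)+1)/n) * Y i) atTop
      (𝓝 (m * ∫ r in Set.Ioc (0:ℝ) 1, w r)) := by
  set Z : ℕ → ℝ := fun i => Y i - m with hZ
  set S : ℕ → ℝ := fun k => ∑ i ∈ Finset.range k, Z i with hSdef
  have hS : Tendsto (fun k : ℕ => (k:ℝ)⁻¹ * S k) atTop (𝓝 0) := by
    have h1 : Tendsto (fun k : ℕ => (k:ℝ)⁻¹ * ∑ i ∈ Finset.range k, Y i - m) atTop (𝓝 0) := by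
      simpa using hY.sub (tendsto_const_nhds (x := m))
    apply h1.congr'
    filter_upwards [eventually_ge_atTop 1] with k hk
    have hk0 : ((k:ℝ)) ≠ 0 := by positivity
    simp only [hSdef, hZ, Finset.sum_sub_distrib, Finset.sum_const, Finset.card_range,
      nsmul_eq_mul, mul_sub]
    field_simp
  set b : ℕ → ℝ := fun k => |(k:ℝ)⁻¹ * S k| with hbdef
  have hb : Tendsto b atTop (𝓝 0) := by
    have := hS.abs
    rwa [abs_zero] at this
  have hbnn : ∀ k, 0 ≤ b k := fun k => abs_nonneg _
  have hces : Tendsto (fun n : ℕ => (n:ℝ)⁻¹ * ∑ k ∈ Finset.range n, b k) atTop (𝓝 0) :=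
    hb.cesaro
  -- the error term tends to 0
  have hE : Tendsto (fun n : ℕ => (n:ℝ)⁻¹ * ∑ i ∈ Finset.range n, w (((i:ℝ)+1)/n) * Z i)
      atTop (𝓝 0) := by
    apply squeeze_zero_norm'
      (a := fun n : ℕ => |w 1| * b n + K * ((n:ℝ)⁻¹ * ∑ k ∈ Finset.range n, b k))
    · filter_upwards [eventually_ge_atTop 1] with n hn
      have hn0 : (0:ℝ) < n := by exact_mod_cast hn
      set f : ℕ → ℝ := fun i => w (((i:ℝ)+1)/n) with hfdef
      have habel := Finset.sum_range_by_parts f Z n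
      simp only [smul_eq_mul] at habel
      have hfn1 : f (n-1) = w 1 := by
        have hx : ((((n-1:ℕ)):ℝ)+1)/n = 1 := by
          rw [Nat.cast_sub hn]; field_simp; push_cast; ring
        simpa [hfdef] using congrArg w hx
      -- bound the Abel sum
      have hfd : ∀ i ∈ Finset.range (n-1), |f (i+1) - f i| ≤ (K:ℝ)/n := by
        intro i hi
        have hilt : i + 1 < n := by
          have := Finset.mem_range.mp hi
          omega
        have hmem1 : ((i:ℝ)+1+1)/n ∈ Set.Ioc (0:ℝ) 1 := by
          constructor
          · positivity
          · rw [div_le_one hn0]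
            have : (i:ℝ) + 1 + 1 ≤ n := by exact_mod_cast Nat.succ_le_of_lt hilt
            linarith
        have hmem2 : ((i:ℝ)+1)/n ∈ Set.Ioc (0:ℝ) 1 := by
          constructor
          · positivity
          · rw [div_le_one hn0]
            have : (i:ℝ) + 1 ≤ n := by
              have : i + 1 ≤ n := by omega
              exact_mod_cast this
            linarith
        have hdist := hw.dist_le_mul _ hmem1 _ hmem2
        have heq : f (i+1) = w (((i:ℝ)+1+1)/n) := by
          rw [hfdef]; congr 1; push_cast; ring
        calc |f (i+1) - f i| = dist (w (((i:ℝ)+1+1)/n)) (w (((i:ℝ)+1)/n)) := by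
              rw [heq, hfdef, Real.dist_eq]
          _ ≤ K * dist (((i:ℝ)+1+1)/n) (((i:ℝ)+1)/n) := hdist
          _ = K * (1/n) := by
              congr 1
              have hsub : ((i:ℝ)+1+1)/n - ((i:ℝ)+1)/n = 1/n := by field_simp; ring
              rw [Real.dist_eq, hsub, abs_of_nonneg (by positivity : (0:ℝ) ≤ 1/(n:ℝ))]
          _ = (K:ℝ)/n := by ring
      have hS1 : |S n| = (n:ℝ) * b n := by
        show |S n| = (n:ℝ) * |(n:ℝ)⁻¹ * S n|
        rw [abs_mul, abs_of_nonneg (by positivity : (0:ℝ) ≤ (n:ℝ)⁻¹)]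
        field_simp
      have hboundsum : |∑ i ∈ Finset.range n, f i * Z i|
          ≤ |w 1| * ((n:ℝ) * b n) + (K:ℝ) * ∑ k ∈ Finset.range n, b k := by
        rw [habel, hfn1]
        calc |w 1 * S n - ∑ i ∈ Finset.range (n-1), (f (i+1) - f i) * S (i+1)|
            ≤ |w 1 * S n| + |∑ i ∈ Finset.range (n-1), (f (i+1) - f i) * S (i+1)| :=
              abs_sub _ _
          _ ≤ |w 1| * ((n:ℝ) * b n) + (K:ℝ) * ∑ k ∈ Finset.range n, b k := by
              apply add_le_add
              · rw [abs_mul, hS1]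
              · calc |∑ i ∈ Finset.range (n-1), (f (i+1) - f i) * S (i+1)|
                    ≤ ∑ i ∈ Finset.range (n-1), |(f (i+1) - f i) * S (i+1)| :=
                      Finset.abs_sum_le_sum_abs _ _
                  _ ≤ ∑ i ∈ Finset.range (n-1), (K:ℝ) * b (i+1) := by
                      apply Finset.sum_le_sum
                      intro i hi
                      rw [abs_mul]
                      have h1 : |S (i+1)| = ((i:ℝ)+1) * b (i+1) := by
                        show |S (i+1)| = ((i:ℝ)+1) * |(((i+1:ℕ)):ℝ)⁻¹ * S (i+1)|
                        rw [abs_mul, abs_of_nonneg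
                          (by positivity : (0:ℝ) ≤ (((i+1:ℕ)):ℝ)⁻¹)]
                        push_cast
                        field_simp
                      have hle : ((i:ℝ)+1) ≤ n := by
                        have := Finset.mem_range.mp hi
                        have : i + 1 ≤ n := by omega
                        exact_mod_cast this
                      calc |f (i+1) - f i| * |S (i+1)|
                          ≤ ((K:ℝ)/n) * (((i:ℝ)+1) * b (i+1)) := by
                            rw [h1]
                            apply mul_le_mul (hfd i hi) le_rfl (by positivity)
                              (by positivity)
                        _ ≤ ((K:ℝ)/n) * ((n:ℝ) * b (i+1)) := by
                            apply mul_le_mul le_rfl (by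
                              apply mul_le_mul hle le_rfl (hbnn _) (le_of_lt hn0))
                              (by positivity) (by positivity)
                        _ = (K:ℝ) * b (i+1) := by field_simp
                  _ ≤ (K:ℝ) * ∑ k ∈ Finset.range n, b k := by
                      rw [← Finset.mul_sum]
                      apply mul_le_mul le_rfl ?_ ?_ (by positivity)
                      · have : ∑ i ∈ Finset.range (n-1), b (i+1)
                            = ∑ k ∈ Finset.Ico 1 n, b k := by
                          rw [Finset.sum_Ico_eq_sum_range]
                          apply Finset.sum_congr (by congr 1) (fun i _ => by rw [add_comm])
                        rw [this]
                        apply Finset.sum_le_sum_of_subset_of_nonneg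
                        · intro k hk
                          simp only [Finset.mem_Ico] at hk
                          exact Finset.mem_range.mpr hk.2
                        · intro k _ _; exact hbnn k
                      · apply Finset.sum_nonneg; intro i _; exact hbnn _
      calc ‖(n:ℝ)⁻¹ * ∑ i ∈ Finset.range n, w (((i:ℝ)+1)/n) * Z i‖
          = (n:ℝ)⁻¹ * |∑ i ∈ Finset.range n, f i * Z i| := by
            rw [Real.norm_eq_abs, abs_mul, abs_of_nonneg (by positivity : (0:ℝ) ≤ (n:ℝ)⁻¹)]
        _ ≤ (n:ℝ)⁻¹ * (|w 1| * ((n:ℝ) * b n) + (K:ℝ) * ∑ k ∈ Finset.range n, b k) := by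
            apply mul_le_mul le_rfl hboundsum (abs_nonneg _) (by positivity)
        _ = |w 1| * b n + (K:ℝ) * ((n:ℝ)⁻¹ * ∑ k ∈ Finset.range n, b k) := by
            field_simp
    · have h0 : (0:ℝ) = |w 1| * 0 + (K:ℝ) * 0 := by ring
      rw [h0]
      exact (hb.const_mul _).add (hces.const_mul _)
  -- combine with the Riemann sum
  have hR := riemann_lip w K hw
  have hdecomp : ∀ n : ℕ, (n:ℝ)⁻¹ * ∑ i ∈ Finset.range n, w (((i:ℝ)+1)/n) * Y i
      = m * ((n:ℝ)⁻¹ * ∑ i ∈ Finset.range n, w (((i:ℝ)+1)/n))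
        + (n:ℝ)⁻¹ * ∑ i ∈ Finset.range n, w (((i:ℝ)+1)/n) * Z i := by
    intro n
    have hzz : ∑ i ∈ Finset.range n, w (((i:ℝ)+1)/n) * Z i
        = ∑ i ∈ Finset.range n, w (((i:ℝ)+1)/n) * Y i
          - m * ∑ i ∈ Finset.range n, w (((i:ℝ)+1)/n) := by
      rw [Finset.mul_sum, ← Finset.sum_sub_distrib]
      exact Finset.sum_congr rfl (fun i _ => by rw [hZ]; ring)
    rw [hzz]; ring
  have := (hR.const_mul m).add hE
  rw [add_zero] at this
  exact this.congr (fun n => (hdecomp n).symm)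

/-- Under Assumption A1, `n⁻¹ ∑_{t=1}^{n} u_t⁴` (with `u_t = g(t/n) ε_t`)
converges in probability to `E[ε₁⁴] ⬝ ∫_0^1 g(r)⁴ dr`. -/
theorem fourth_moment_partial_sum_lln
    {Ω : Type*} [MeasureSpace Ω] [IsProbabilityMeasure (ℙ : Measure Ω)]
    (ε : ℕ → Ω → ℝ) (hmeas : ∀ t, Measurable (ε t))
    (hindep : iIndepFun ε ℙ)
    (hid : ∀ t, IdentDistrib (ε t) (ε 1) ℙ ℙ)
    (hvar : ∫ ω, (ε 1 ω) ^ 2 ∂ℙ = 1)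
    (hmom4 : Integrable (fun ω => (ε 1 ω) ^ 4) ℙ)
    (g : ℝ → ℝ)
    (hg_pos : ∀ r ∈ Set.Ioc (0:ℝ) 1, 0 < g r)
    (hg_bdd : ∃ M, ∀ r ∈ Set.Ioc (0:ℝ) 1, |g r| ≤ M)
    (hg_lip : ∃ K, LipschitzOnWith K g (Set.Ioc (0:ℝ) 1)) :
    TendstoInMeasure ℙ
      (fun (n : ℕ) ω => (n : ℝ)⁻¹ *
        ∑ t ∈ Finset.Icc 1 n, (g ((t : ℝ) / n) * ε t ω) ^ 4)
      atTop
      (fun _ => (∫ ω, (ε 1 ω) ^ 4 ∂ℙ) * ∫ r in Set.Ioc (0:ℝ) 1, (g r) ^ 4) := by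
  obtain ⟨M, hM⟩ := hg_bdd
  obtain ⟨K, hK⟩ := hg_lip
  have hM0 : 0 ≤ M := le_trans (abs_nonneg _) (hM 1 (by constructor <;> norm_num))
  -- w = g^4 is Lipschitz on (0,1]
  set w : ℝ → ℝ := fun r => (g r)^4 with hwdef
  have hwlip : LipschitzOnWith (Real.toNNReal (4*M^3*K)) w (Set.Ioc 0 1) := by
    apply LipschitzOnWith.of_dist_le'
    intro a ha b hb
    rw [Real.dist_eq, Real.dist_eq]
    set x := g a
    set y := g b
    have hx : |x| ≤ M := hM a ha
    have hy : |y| ≤ M := hM b hb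
    have hgab : |x - y| ≤ K * |a - b| := by
      have := hK.dist_le_mul a ha b hb
      rwa [Real.dist_eq, Real.dist_eq] at this
    have hfac : x^4 - y^4 = (x - y) * (x^3 + x^2*y + x*y^2 + y^3) := by ring
    have h4 : |x^3 + x^2*y + x*y^2 + y^3| ≤ 4*M^3 := by
      have e1 : |x^3 + x^2*y + x*y^2 + y^3| ≤ |x^3| + |x^2*y| + |x*y^2| + |y^3| := by
        calc |x^3 + x^2*y + x*y^2 + y^3| ≤ |x^3 + x^2*y + x*y^2| + |y^3| := abs_add_le _ _
          _ ≤ |x^3 + x^2*y| + |x*y^2| + |y^3| := by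
              gcongr; exact abs_add_le _ _
          _ ≤ |x^3| + |x^2*y| + |x*y^2| + |y^3| := by
              gcongr; exact abs_add_le _ _
      have hx3 : |x^3| ≤ M^3 := by rw [abs_pow]; gcongr
      have hy3 : |y^3| ≤ M^3 := by rw [abs_pow]; gcongr
      have hx2y : |x^2*y| ≤ M^3 := by
        rw [abs_mul, abs_pow]
        calc |x|^2 * |y| ≤ M^2 * M := by gcongr
          _ = M^3 := by ring
      have hxy2 : |x*y^2| ≤ M^3 := by
        rw [abs_mul, abs_pow]
        calc |x| * |y|^2 ≤ M * M^2 := by gcongr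
          _ = M^3 := by ring
      linarith
    calc |w a - w b| = |x - y| * |x^3 + x^2*y + x*y^2 + y^3| := by
          rw [hwdef]; dsimp only; rw [← abs_mul, ← hfac]
      _ ≤ (K * |a - b|) * (4*M^3) := by
          apply mul_le_mul hgab h4 (abs_nonneg _)
          positivity
      _ = (4*M^3*K) * |a - b| := by ring
  -- the i.i.d. fourth powers
  set X : ℕ → Ω → ℝ := fun i ω => (ε (i+1) ω)^4 with hXdef
  have hp4 : Measurable (fun x : ℝ => x^4) := measurable_id.pow_const 4
  have hXint : Integrable (X 0) ℙ := hmom4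
  have hXindep : Pairwise (Function.onFun (IndepFun · · ℙ) X) := by
    intro i j hij
    exact (hindep.indepFun (show i+1 ≠ j+1 by omega)).comp hp4 hp4
  have hXident : ∀ i, IdentDistrib (X i) (X 0) ℙ ℙ := by
    intro i
    exact (hid (i+1)).comp hp4
  have hslln := strong_law_ae_real X hXint hXindep hXident
  set m : ℝ := ∫ ω, (ε 1 ω)^4 ∂ℙ with hmdef
  -- a.e. convergence of the target
  have hae : ∀ᵐ ω ∂(ℙ : Measure Ω), Tendsto
      (fun (n : ℕ) => (n : ℝ)⁻¹ * ∑ t ∈ Finset.Icc 1 n, (g ((t : ℝ) / n) * ε t ω) ^ 4)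
      atTop (𝓝 (m * ∫ r in Set.Ioc (0:ℝ) 1, w r)) := by
    filter_upwards [hslln] with ω hω
    have hY : Tendsto (fun n : ℕ => (n:ℝ)⁻¹ * ∑ i ∈ Finset.range n, X i ω) atTop (𝓝 m) := by
      apply hω.congr
      intro n
      rw [div_eq_inv_mul]
    have := det_weighted w _ hwlip (fun i => X i ω) m hY
    apply this.congr
    intro n
    congr 1
    rw [← Finset.Ico_add_one_right_eq_Icc, Finset.sum_Ico_eq_sum_range]
    simp only [Nat.add_sub_cancel]
    apply Finset.sum_congr rfl
    intro i _
    rw [hwdef, hXdef]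
    dsimp only
    rw [mul_pow]
    have h1 : ((1+i : ℕ):ℝ) = (i:ℝ)+1 := by push_cast; ring
    have h2 : 1+i = i+1 := by omega
    rw [h1, h2]
  -- conclude convergence in probability
  apply tendstoInMeasure_of_tendsto_ae
  · intro n
    apply Measurable.aestronglyMeasurable
    apply Measurable.const_mul
    apply Finset.measurable_sum
    intro t _
    exact ((hmeas t).const_mul _).pow_const 4
  · exact hae
end

section
/- (Asymptotic-equivalence content of Proposition 4.) Assume E[ε_1⁴] > 1. Let w_{t,n}, t = a_n+1, …, a_n+q, be random weights such that q^{1/2} · max_t | w_{t,n} − 1 | converges in probability to 0. Define the corrected statistic pieces C̄_k = Σ_{t=a_n+1}^{a_n+k} w_{t,n} ε_t², η̄_n = (1/q) Σ_{t=a_n+1}^{a_n+q} w_{t,n}² ε_t⁴, B̄_k = ( C̄_k − (k/q) C̄_q ) / √( η̄_n − ( q^{-1} C̄_q )² ), and the uncorrected pieces C_k = Σ_{t=a_n+1}^{a_n+k} ε_t², η_n = (1/q) Σ_{t=a_n+1}^{a_n+q} ε_t⁴, B_k = ( C_k − (k/q) C_q ) / √( η_n − ( q^{-1} C_q )² ).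 Then max_{1≤k≤q} | q^{-1/2} B̄_k − q^{-1/2} B_k | converges in probability to 0 as n → ∞. -/
open MeasureTheory ProbabilityTheory Filter Topology

set_option maxHeartbeats 1000000

namespace CusumAux

open Topology

lemma real_le_biSup (s : Finset ℕ) (f : ℕ → ℝ) (hf : ∀ i, 0 ≤ f i) {t : ℕ} (ht : t ∈ s) :
    f t ≤ ⨆ i ∈ s, f i := by
  have hbdd : BddAbove (Set.range fun i => ⨆ _ : i ∈ s, f i) := by
    refine ⟨∑ j ∈ s, f j, ?_⟩
    rintro x ⟨i, rfl⟩
    by_cases h : i ∈ s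
    · calc (⨆ _ : i ∈ s, f i) = f i := ciSup_pos h
        _ ≤ ∑ j ∈ s, f j := Finset.single_le_sum (fun j _ => hf j) h
    · have : IsEmpty (i ∈ s) := ⟨h⟩
      calc (⨆ _ : i ∈ s, f i) = 0 := Real.iSup_of_isEmpty _
        _ ≤ ∑ j ∈ s, f j := Finset.sum_nonneg fun j _ => hf j
  calc f t = ⨆ _ : t ∈ s, f t := (ciSup_pos (f := fun _ => f t) ht).symm
    _ ≤ ⨆ i ∈ s, f i := le_ciSup hbdd t

lemma real_biSup_le (s : Finset ℕ) (f : ℕ → ℝ) {b : ℝ} (hb : 0 ≤ b) (h : ∀ i ∈ s, f i ≤ b) :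
    (⨆ i ∈ s, f i) ≤ b :=
  Real.iSup_le (fun i => Real.iSup_le (fun hi => h i hi) hb) hb

lemma sum_Icc_shift (f : ℕ → ℝ) (a k : ℕ) :
    ∑ t ∈ Finset.Icc (a + 1) (a + k), f t = ∑ i ∈ Finset.range k, f (a + 1 + i) := by
  rw [show Finset.Icc (a + 1) (a + k) = Finset.Ico (a + 1) (a + k + 1) by
    rw [Finset.Ico_add_one_right_eq_Icc], Finset.sum_Ico_eq_sum_range]
  have : a + k + 1 - (a + 1) = k := by omega
  rw [this]

lemma identDistrib_add {Ω : Type*} [MeasureSpace Ω] [IsProbabilityMeasure (ℙ : Measure Ω)]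
    {f g f' g' : Ω → ℝ}
    (hf : Measurable f) (hg : Measurable g) (hf' : Measurable f') (hg' : Measurable g')
    (h1 : IdentDistrib f f' ℙ ℙ) (h2 : IdentDistrib g g' ℙ ℙ)
    (hi : IndepFun f g ℙ) (hi' : IndepFun f' g' ℙ) :
    IdentDistrib (fun ω => f ω + g ω) (fun ω => f' ω + g' ω) ℙ ℙ := by
  have hpair : IdentDistrib (fun ω => (f ω, g ω)) (fun ω => (f' ω, g' ω)) ℙ ℙ := by
    refine ⟨(hf.prodMk hg).aemeasurable, (hf'.prodMk hg').aemeasurable, ?_⟩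
    rw [(indepFun_iff_map_prod_eq_prod_map_map hf.aemeasurable hg.aemeasurable).1 hi,
      (indepFun_iff_map_prod_eq_prod_map_map hf'.aemeasurable hg'.aemeasurable).1 hi',
      h1.map_eq, h2.map_eq]
  exact hpair.comp (measurable_fst.add measurable_snd)

lemma blockSum_identDistrib {Ω : Type*} [MeasureSpace Ω] [IsProbabilityMeasure (ℙ : Measure Ω)]
    (Y : ℕ → Ω → ℝ) (hmeas : ∀ t, Measurable (Y t))
    (hindep : iIndepFun Y ℙ)
    (hid : ∀ t, IdentDistrib (Y t) (Y 1) ℙ ℙ)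
    (m : ℕ) (j j' : ℕ) :
    IdentDistrib (fun ω => ∑ i ∈ Finset.range m, Y (j + i) ω)
      (fun ω => ∑ i ∈ Finset.range m, Y (j' + i) ω) ℙ ℙ := by
  induction m with
  | zero => simpa using IdentDistrib.refl (f := fun _ : Ω => (0:ℝ)) aemeasurable_const
  | succ m ih =>
    have hsum_meas : ∀ (l : ℕ), Measurable (fun ω => ∑ i ∈ Finset.range m, Y (l + i) ω) :=
      fun l => Finset.measurable_sum _ fun i _ => hmeas _
    have hindep_sum : ∀ (l : ℕ), IndepFun (fun ω => ∑ i ∈ Finset.range m, Y (l + i) ω)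
        (Y (l + m)) ℙ := by
      intro l
      have hsub : ∀ ω, ∑ i ∈ Finset.range m, Y (l + i) ω
          = (∑ t ∈ (Finset.range m).image (fun i => l + i), Y t) ω := by
        intro ω
        rw [Finset.sum_apply]
        exact (Finset.sum_image (g := fun i => l + i) (f := fun t => Y t ω)
          (fun x _ y _ h => Nat.add_left_cancel h)).symm
      have hnot : l + m ∉ (Finset.range m).image (fun i => l + i) := by
        simp only [Finset.mem_image, Finset.mem_range]
        rintro ⟨i, hi, hh⟩
        omega
      have h2 := hindep.indepFun_finsetSum_of_notMem hmeas hnot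
      have heq : (∑ t ∈ (Finset.range m).image (fun i => l + i), Y t)
          = fun ω => ∑ i ∈ Finset.range m, Y (l + i) ω := funext fun ω => (hsub ω).symm
      rwa [heq] at h2
    simp only [Finset.sum_range_succ]
    exact identDistrib_add (hsum_meas j) (hmeas _) (hsum_meas j') (hmeas _)
      (ih) ((hid (j + m)).trans (hid (j' + m)).symm)
      (hindep_sum j) (hindep_sum j')

lemma blockLLN {Ω : Type*} [MeasureSpace Ω] [IsProbabilityMeasure (ℙ : Measure Ω)]
    (ε : ℕ → Ω → ℝ) (hmeas : ∀ t, Measurable (ε t))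
    (hindep : iIndepFun ε ℙ)
    (hid : ∀ t, IdentDistrib (ε t) (ε 1) ℙ ℙ)
    (g : ℝ → ℝ) (hg : Measurable g) (hint : Integrable (fun ω => g (ε 1 ω)) ℙ)
    (a q : ℕ → ℕ) (hq : Tendsto q atTop atTop) :
    TendstoInMeasure ℙ
      (fun n ω => (q n : ℝ)⁻¹ * ∑ t ∈ Finset.Icc (a n + 1) (a n + q n), g (ε t ω))
      atTop (fun _ => ∫ ω, g (ε 1 ω) ∂ℙ) := by
  set Y : ℕ → Ω → ℝ := fun t => g ∘ ε t with hY
  have hYmeas : ∀ t, Measurable (Y t) := fun t => hg.comp (hmeas t)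
  have hYindep : iIndepFun Y ℙ := hindep.comp (fun _ => g) fun _ => hg
  have hYid : ∀ t, IdentDistrib (Y t) (Y 1) ℙ ℙ := fun t => (hid t).comp hg
  set c : ℝ := ∫ ω, g (ε 1 ω) ∂ℙ with hc
  have hY0int : Integrable (Y 0) ℙ := ((hYid 0).integrable_iff).2 hint
  have hSL := strong_law_ae_real Y hY0int
    (fun i j hij => (hindep.indepFun hij).comp hg hg)
    (fun i => (hYid i).trans (hYid 0).symm)
  have hEY0 : ∫ ω, Y 0 ω ∂ℙ = c := (hYid 0).integral_eq
  rw [hEY0] at hSL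
  set T : ℕ → Ω → ℝ := fun n ω => (q n : ℝ)⁻¹ * ∑ i ∈ Finset.range (q n), Y i ω with hT
  have hTae : ∀ᵐ ω ∂ℙ, Tendsto (fun n => T n ω) atTop (𝓝 c) := by
    filter_upwards [hSL] with ω hω
    have := hω.comp hq
    refine this.congr fun n => ?_
    simp [T, div_eq_inv_mul]
  have hTmeas : ∀ n, AEStronglyMeasurable (T n) ℙ :=
    fun n => ((Finset.measurable_sum _ fun i _ => hYmeas i).const_mul _).aestronglyMeasurable
  have hTtm : TendstoInMeasure ℙ T atTop (fun _ => c) :=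
    tendstoInMeasure_of_tendsto_ae hTmeas hTae
  refine tendstoInMeasure_iff_dist.2 fun δ hδ => ?_
  have hmain := tendstoInMeasure_iff_dist.1 hTtm δ hδ
  refine hmain.congr fun n => ?_
  have hId : IdentDistrib (fun ω => (q n : ℝ)⁻¹ * ∑ i ∈ Finset.range (q n), Y (0 + i) ω)
      (fun ω => (q n : ℝ)⁻¹ * ∑ i ∈ Finset.range (q n), Y (a n + 1 + i) ω) ℙ ℙ :=
    (blockSum_identDistrib Y hYmeas hYindep hYid (q n) 0 (a n + 1)).comp
      (measurable_const_mul _)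
  have hE : MeasurableSet {y : ℝ | δ ≤ dist y c} :=
    (isClosed_le continuous_const (continuous_id.dist continuous_const)).measurableSet
  have hmeq := hId.measure_mem_eq hE
  simp only [Set.preimage_setOf_eq] at hmeq
  calc ℙ {x | δ ≤ dist (T n x) ((fun _ => c) x)}
      = ℙ {x | δ ≤ dist ((q n : ℝ)⁻¹ * ∑ i ∈ Finset.range (q n), Y (a n + 1 + i) x) c} := by
        rw [← hmeq]
        congr 1
        ext x
        simp [T, zero_add]
    _ = ℙ {x | δ ≤ dist ((q n : ℝ)⁻¹ * ∑ t ∈ Finset.Icc (a n + 1) (a n + q n), g (ε t x))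
          ((fun _ => c) x)} := by
        congr 1
        ext x
        simp only [Set.mem_setOf_eq, Y, Function.comp_apply]
        rw [sum_Icc_shift (fun t => g (ε t x)) (a n) (q n)]

lemma key_est (m4 qr X Y Xb Yb N Nb d : ℝ)
    (hm4 : 1 < m4) (hqr : 1 ≤ qr)
    (hd0 : 0 ≤ d)
    (hdθ : d ≤ min (min 1 ((m4 - 1) / 8)) ((m4 - 1) / (12 * (m4 + 5))))
    (hX0 : 0 ≤ X) (hX : |X - 1| ≤ min (min 1 ((m4 - 1) / 8)) ((m4 - 1) / (12 * (m4 + 5))))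
    (hY0 : 0 ≤ Y) (hY : |Y - m4| ≤ min (min 1 ((m4 - 1) / 8)) ((m4 - 1) / (12 * (m4 + 5))))
    (hXb : |Xb - X| ≤ d * X) (hYb : |Yb - Y| ≤ 3 * d * Y)
    (hN : |N| ≤ 2 * qr * X) (hNd : |Nb - N| ≤ 2 * d * qr * X) :
    |(Real.sqrt qr)⁻¹ * (Nb / Real.sqrt (Yb - Xb ^ 2)) -
      (Real.sqrt qr)⁻¹ * (N / Real.sqrt (Y - X ^ 2))| ≤
      (Real.sqrt qr * d) *
        (4 / Real.sqrt ((m4 - 1) / 4) +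
          6 * (m4 + 5) / (((m4 - 1) / 4) * Real.sqrt ((m4 - 1) / 4))) := by
  set θ := min (min 1 ((m4 - 1) / 8)) ((m4 - 1) / (12 * (m4 + 5))) with hθdef
  have hm4' : (0:ℝ) < m4 - 1 := by linarith
  have hm5 : (0:ℝ) < m4 + 5 := by linarith
  have hθ1 : θ ≤ 1 := le_trans (min_le_left _ _) (min_le_left _ _)
  have hθ8 : θ ≤ (m4 - 1) / 8 := le_trans (min_le_left _ _) (min_le_right _ _)
  have hθ12 : θ ≤ (m4 - 1) / (12 * (m4 + 5)) := min_le_right _ _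
  have hd1 : d ≤ 1 := hdθ.trans hθ1
  have hd12 : d * (12 * (m4 + 5)) ≤ m4 - 1 := by
    have := hdθ.trans hθ12
    rwa [le_div_iff₀ (by positivity)] at this
  obtain ⟨hXl, hXu⟩ := abs_le.1 hX
  obtain ⟨hYl, hYu⟩ := abs_le.1 hY
  obtain ⟨hXbl, hXbu⟩ := abs_le.1 hXb
  obtain ⟨hYbl, hYbu⟩ := abs_le.1 hYb
  have hX2 : X ≤ 2 := by linarith
  have hYm : Y ≤ m4 + 1 := by linarith
  set c2 := (m4 - 1) / 4 with hc2def
  have hc2 : 0 < c2 := by positivity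
  have hD2 : 2 * c2 ≤ Y - X ^ 2 := by
    nlinarith [mul_self_le_mul_self hX0 (by linarith : X ≤ 1 + θ)]
  have hdd : d * d ≤ d := by nlinarith
  have hXb0 : 0 ≤ Xb := by nlinarith [mul_nonneg hd0 hX0]
  have hXbsq_u : Xb ^ 2 - X ^ 2 ≤ 3 * d * X ^ 2 := by
    have h1 : Xb * Xb ≤ (X + d * X) * (X + d * X) :=
      mul_self_le_mul_self hXb0 (by linarith)
    nlinarith [mul_nonneg (mul_nonneg hd0 hd0) (mul_self_nonneg X)]
  have hXbsq_l : X ^ 2 - Xb ^ 2 ≤ 3 * d * X ^ 2 := by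
    have h0 : (0:ℝ) ≤ X - d * X := by nlinarith
    have h1 : (X - d * X) * (X - d * X) ≤ Xb * Xb :=
      mul_self_le_mul_self h0 (by linarith)
    nlinarith [mul_nonneg (mul_nonneg hd0 hd0) (mul_self_nonneg X)]
  have hX2sq : X ^ 2 ≤ 4 := by nlinarith
  have hDb2diff : |(Yb - Xb ^ 2) - (Y - X ^ 2)| ≤ 3 * d * (m4 + 5) := by
    rw [abs_le]
    constructor <;> nlinarith [mul_nonneg hd0 hY0, mul_nonneg hd0 (sq_nonneg X)]
  have hDb2 : c2 ≤ Yb - Xb ^ 2 := by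
    obtain ⟨h1, h2⟩ := abs_le.1 hDb2diff
    nlinarith
  set s := Real.sqrt c2 with hsdef
  have hs0 : 0 < s := Real.sqrt_pos.2 hc2
  have hss : s * s = c2 := Real.mul_self_sqrt hc2.le
  set sD := Real.sqrt (Y - X ^ 2) with hsDdef
  set sDb := Real.sqrt (Yb - Xb ^ 2) with hsDbdef
  have hD2_0 : (0:ℝ) ≤ Y - X ^ 2 := by linarith
  have hDb2_0 : (0:ℝ) ≤ Yb - Xb ^ 2 := by linarith
  have hsD_ge : s ≤ sD := Real.sqrt_le_sqrt (by linarith)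
  have hsDb_ge : s ≤ sDb := Real.sqrt_le_sqrt (by linarith)
  have hsD_pos : 0 < sD := lt_of_lt_of_le hs0 hsD_ge
  have hsDb_pos : 0 < sDb := lt_of_lt_of_le hs0 hsDb_ge
  have hsDsq : sD * sD = Y - X ^ 2 := Real.mul_self_sqrt hD2_0
  have hsDbsq : sDb * sDb = Yb - Xb ^ 2 := Real.mul_self_sqrt hDb2_0
  have hsdiff : |sD - sDb| ≤ 3 * d * (m4 + 5) / (2 * s) := by
    rw [le_div_iff₀ (by positivity)]
    have e : (sD - sDb) * (sD + sDb) = (Y - X ^ 2) - (Yb - Xb ^ 2) := by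
      calc (sD - sDb) * (sD + sDb) = sD * sD - sDb * sDb := by ring
        _ = (Y - X ^ 2) - (Yb - Xb ^ 2) := by rw [hsDsq, hsDbsq]
    calc |sD - sDb| * (2 * s) ≤ |sD - sDb| * (sD + sDb) := by
          apply mul_le_mul_of_nonneg_left (by linarith) (abs_nonneg _)
      _ = |(sD - sDb) * (sD + sDb)| := by
          rw [abs_mul, abs_of_pos (by linarith : (0:ℝ) < sD + sDb)]
      _ = |(Yb - Xb ^ 2) - (Y - X ^ 2)| := by rw [e, abs_sub_comm]
      _ ≤ 3 * d * (m4 + 5) := hDb2diff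
  set t := Real.sqrt qr with htdef
  have ht1 : 1 ≤ t := by rw [htdef]; exact Real.one_le_sqrt.2 hqr
  have ht0 : 0 < t := by linarith
  have htt : t * t = qr := Real.mul_self_sqrt (by linarith)
  have step1 : Nb / sDb - N / sD = (Nb - N) / sDb + N * (sD - sDb) / (sDb * sD) := by
    field_simp
    ring
  have step2 : |Nb / sDb - N / sD| ≤ |Nb - N| / sDb + |N| * |sD - sDb| / (sDb * sD) := by
    rw [step1]
    refine (abs_add_le _ _).trans (le_of_eq ?_)
    rw [abs_div, abs_of_pos hsDb_pos, abs_div, abs_mul,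
      abs_of_pos (mul_pos hsDb_pos hsD_pos)]
  have T1 : |Nb - N| / sDb ≤ 2 * d * qr * X / s :=
    div_le_div₀ (by positivity) hNd hs0 hsDb_ge
  have T2 : |N| * |sD - sDb| / (sDb * sD) ≤
      (2 * qr * X * (3 * d * (m4 + 5) / (2 * s))) / (s * s) := by
    apply div_le_div₀ (by positivity)
    · exact mul_le_mul hN hsdiff (abs_nonneg _) (by positivity)
    · positivity
    · exact mul_le_mul hsDb_ge hsD_ge hs0.le hsDb_pos.le
  have habs : |(t)⁻¹ * (Nb / sDb) - (t)⁻¹ * (N / sD)| = t⁻¹ * |Nb / sDb - N / sD| := by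
    rw [← mul_sub, abs_mul, abs_of_nonneg (by positivity)]
  rw [habs]
  have hchain : t⁻¹ * |Nb / sDb - N / sD| ≤
      t⁻¹ * (2 * d * qr * X / s + (2 * qr * X * (3 * d * (m4 + 5) / (2 * s))) / (s * s)) := by
    apply mul_le_mul_of_nonneg_left _ (by positivity)
    exact step2.trans (add_le_add T1 T2)
  refine hchain.trans ?_
  have hqr_eq : qr = t * t := htt.symm
  rw [hqr_eq]
  have hid : t⁻¹ * (2 * d * (t * t) * X / s + (2 * (t * t) * X * (3 * d * (m4 + 5) / (2 * s))) / (s * s))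
      = (t * d) * (2 * X / s + 3 * X * (m4 + 5) / (s * s * s)) := by
    field_simp
  rw [hid]
  have hfin : (t * d) * (2 * X / s + 3 * X * (m4 + 5) / (s * s * s)) ≤
      (t * d) * (4 / s + 6 * (m4 + 5) / (s * s * s)) := by
    apply mul_le_mul_of_nonneg_left _ (by positivity)
    apply add_le_add
    · exact div_le_div₀ (by norm_num) (by linarith) hs0 le_rfl
    · refine div_le_div₀ (by positivity) ?_ (by positivity) le_rfl
      exact mul_le_mul_of_nonneg_right (by linarith) hm5.le
  refine hfin.trans (le_of_eq ?_)
  rw [← hss]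

end CusumAux

open CusumAux

/-- asymptotic-equivalence content of Proposition 4. If `E[ε₁⁴] > 1` and
the random weights `w_{t,n}` satisfy `q^{1/2} max_t |w_{t,n} − 1| → 0` in probability, then
the corrected subsample CUSUM statistic (built from `w_{t,n} ε_t²`) and the uncorrected one
(built from `ε_t²`) are uniformly asymptotically equivalent. -/
theorem corrected_cusum_asymptotic_equivalence
    {Ω : Type*} [MeasureSpace Ω] [IsProbabilityMeasure (ℙ : Measure Ω)]
    (ε : ℕ → Ω → ℝ) (hmeas : ∀ t, Measurable (ε t))
    (hindep : iIndepFun ε ℙ)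
    (hid : ∀ t, IdentDistrib (ε t) (ε 1) ℙ ℙ)
    (hvar : ∫ ω, (ε 1 ω) ^ 2 ∂ℙ = 1)
    (hmom4 : Integrable (fun ω => (ε 1 ω) ^ 4) ℙ)
    (hmom4_gt : 1 < ∫ ω, (ε 1 ω) ^ 4 ∂ℙ)
    (γ : ℝ) (hγ : γ ∈ Set.Ioo (0:ℝ) 1)
    (r : ℕ → ℝ) (hr : ∀ n, r n ∈ Set.Ioo (0:ℝ) 1)
    (a q : ℕ → ℕ)
    (ha : ∀ n, a n = ⌊r n * n⌋₊)
    (hq : ∀ n, q n = ⌊(n : ℝ) ^ γ⌋₊)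
    (h_sub : ∀ n, a n + q n ≤ n)
    (w : ℕ → ℕ → Ω → ℝ)
    (hw_meas : ∀ n t, Measurable (w n t))
    (hw : TendstoInMeasure ℙ
      (fun (n : ℕ) ω => Real.sqrt (q n) *
        ⨆ t ∈ Finset.Icc (a n + 1) (a n + q n), |w n t ω - 1|)
      atTop (fun _ => 0))
    (Cbar C : ℕ → ℕ → Ω → ℝ) (ηbar η : ℕ → Ω → ℝ) (Bbar B : ℕ → ℕ → Ω → ℝ)
    (hCbar : ∀ n k ω, Cbar n k ω =
      ∑ t ∈ Finset.Icc (a n + 1) (a n + k), w n t ω * (ε t ω) ^ 2)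
    (hC : ∀ n k ω, C n k ω = ∑ t ∈ Finset.Icc (a n + 1) (a n + k), (ε t ω) ^ 2)
    (hηbar : ∀ n ω, ηbar n ω =
      (q n : ℝ)⁻¹ * ∑ t ∈ Finset.Icc (a n + 1) (a n + q n), (w n t ω) ^ 2 * (ε t ω) ^ 4)
    (hη : ∀ n ω, η n ω =
      (q n : ℝ)⁻¹ * ∑ t ∈ Finset.Icc (a n + 1) (a n + q n), (ε t ω) ^ 4)
    (hBbar : ∀ n k ω, Bbar n k ω =
      (Cbar n k ω - (k : ℝ) / (q n) * Cbar n (q n) ω) /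
        Real.sqrt (ηbar n ω - ((q n : ℝ)⁻¹ * Cbar n (q n) ω) ^ 2))
    (hB : ∀ n k ω, B n k ω =
      (C n k ω - (k : ℝ) / (q n) * C n (q n) ω) /
        Real.sqrt (η n ω - ((q n : ℝ)⁻¹ * C n (q n) ω) ^ 2)) :
    TendstoInMeasure ℙ
      (fun (n : ℕ) ω => ⨆ k ∈ Finset.Icc 1 (q n),
        |(Real.sqrt (q n))⁻¹ * Bbar n k ω - (Real.sqrt (q n))⁻¹ * B n k ω|)
      atTop (fun _ => 0) := by
  obtain ⟨hγ0, hγ1⟩ := hγ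
  have hqT : Tendsto q atTop atTop := by
    rw [show q = fun n : ℕ => ⌊(n : ℝ) ^ γ⌋₊ from funext hq]
    exact tendsto_nat_floor_atTop.comp
      ((tendsto_rpow_atTop hγ0).comp tendsto_natCast_atTop_atTop)
  have hint2 : Integrable (fun ω => (ε 1 ω) ^ 2) ℙ := by
    refine (hmom4.add (integrable_const 1)).mono
      (((hmeas 1).pow_const 2).aestronglyMeasurable) (ae_of_all _ fun ω => ?_)
    simp only [Real.norm_eq_abs, Pi.add_apply]
    rw [abs_of_nonneg (by positivity), abs_of_nonneg (by positivity)]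
    nlinarith [sq_nonneg ((ε 1 ω) ^ 2 - 1)]
  set m4 := ∫ ω, (ε 1 ω) ^ 4 ∂ℙ with hm4def
  have hm4gt : 1 < m4 := hmom4_gt
  have hXlim : TendstoInMeasure ℙ (fun n ω => (q n : ℝ)⁻¹ * C n (q n) ω) atTop
      (fun _ => (1:ℝ)) := by
    have h := blockLLN ε hmeas hindep hid (fun x => x ^ 2)
      (measurable_id.pow_const 2) hint2 a q hqT
    have e1 : (fun (n : ℕ) (ω : Ω) =>
        (q n : ℝ)⁻¹ * ∑ t ∈ Finset.Icc (a n + 1) (a n + q n), (ε t ω) ^ 2)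
        = fun n ω => (q n : ℝ)⁻¹ * C n (q n) ω := by
      funext n ω; rw [hC]
    have e2 : (fun _ : Ω => ∫ ω, (ε 1 ω) ^ 2 ∂ℙ) = fun _ : Ω => (1:ℝ) := by
      funext _; exact hvar
    rw [e1, e2] at h
    exact h
  have hYlim : TendstoInMeasure ℙ η atTop (fun _ => m4) := by
    have h := blockLLN ε hmeas hindep hid (fun x => x ^ 4)
      (measurable_id.pow_const 4) hmom4 a q hqT
    have e1 : (fun (n : ℕ) (ω : Ω) =>
        (q n : ℝ)⁻¹ * ∑ t ∈ Finset.Icc (a n + 1) (a n + q n), (ε t ω) ^ 4) = η := by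
      funext n ω; rw [hη]
    rw [e1] at h
    exact h
  refine tendstoInMeasure_iff_dist.2 fun δ hδ => ?_
  set θ := min (min 1 ((m4 - 1) / 8)) ((m4 - 1) / (12 * (m4 + 5))) with hθdef
  have hθpos : 0 < θ :=
    lt_min (lt_min one_pos (by linarith)) (div_pos (by linarith) (by linarith))
  set KK := 4 / Real.sqrt ((m4 - 1) / 4) +
      6 * (m4 + 5) / (((m4 - 1) / 4) * Real.sqrt ((m4 - 1) / 4)) with hKKdef
  have hsq4 : 0 < Real.sqrt ((m4 - 1) / 4) := Real.sqrt_pos.2 (by linarith)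
  have hKK0 : 0 < KK := by
    apply add_pos (div_pos (by norm_num) hsq4)
    exact div_pos (by linarith) (mul_pos (by linarith) hsq4)
  set σ := min θ (δ / (2 * (KK + 1))) with hσdef
  have hσpos : 0 < σ := lt_min hθpos (div_pos hδ (by linarith))
  have hAt := tendstoInMeasure_iff_dist.1 hXlim θ hθpos
  have hBt := tendstoInMeasure_iff_dist.1 hYlim θ hθpos
  have hCt := tendstoInMeasure_iff_dist.1 hw σ hσpos
  have hupper : Tendsto (fun n => ℙ {x | θ ≤ dist ((q n : ℝ)⁻¹ * C n (q n) x) 1}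
      + ℙ {x | θ ≤ dist (η n x) m4}
      + ℙ {x | σ ≤ dist (Real.sqrt (q n) *
          ⨆ t ∈ Finset.Icc (a n + 1) (a n + q n), |w n t x - 1|) 0}) atTop (𝓝 0) := by
    have h := (hAt.add hBt).add hCt
    simpa only [add_zero] using h
  refine tendsto_of_tendsto_of_tendsto_of_le_of_le' tendsto_const_nhds hupper
    (Eventually.of_forall fun n => zero_le) ?_
  filter_upwards [hqT.eventually_ge_atTop 1] with n hn
  refine le_trans (measure_mono ?_)
    (le_trans (measure_union_le _ _) (add_le_add_left (measure_union_le _ _) _))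
  intro ω hω
  simp only [Set.mem_setOf_eq] at hω
  by_contra hcon
  simp only [Set.mem_union, Set.mem_setOf_eq, not_or, not_le] at hcon
  obtain ⟨⟨h1, h2⟩, h3⟩ := hcon
  -- deterministic part
  set qr := (q n : ℝ) with hqrdef
  have hqr : 1 ≤ qr := by rw [hqrdef]; exact_mod_cast hn
  have hqrne : qr ≠ 0 := by linarith
  set d := ⨆ t ∈ Finset.Icc (a n + 1) (a n + q n), |w n t ω - 1| with hddef
  have hd0 : 0 ≤ d := Real.iSup_nonneg fun t => Real.iSup_nonneg fun _ => abs_nonneg _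
  have hdw : ∀ t ∈ Finset.Icc (a n + 1) (a n + q n), |w n t ω - 1| ≤ d :=
    fun t ht => real_le_biSup (Finset.Icc (a n + 1) (a n + q n)) (fun i => |w n i ω - 1|)
      (fun i => abs_nonneg _) ht
  have hsqd : Real.sqrt qr * d < σ := by
    have he : dist (Real.sqrt qr * d) 0 = Real.sqrt qr * d := by
      rw [Real.dist_eq, sub_zero, abs_of_nonneg (mul_nonneg (Real.sqrt_nonneg _) hd0)]
    rw [he] at h3
    exact h3
  have h1sq : 1 ≤ Real.sqrt qr := Real.one_le_sqrt.2 hqr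
  have hdθ : d ≤ θ :=
    le_of_lt (lt_of_le_of_lt (le_mul_of_one_le_left hd0 h1sq)
      (lt_of_lt_of_le hsqd (min_le_left _ _)))
  have hd1 : d ≤ 1 := hdθ.trans (le_trans (min_le_left _ _) (min_le_left _ _))
  have hC0 : ∀ k, 0 ≤ C n k ω := fun k => by
    rw [hC]; exact Finset.sum_nonneg fun t _ => by positivity
  have hCle : ∀ k, k ≤ q n → C n k ω ≤ C n (q n) ω := fun k hk => by
    rw [hC, hC]
    exact Finset.sum_le_sum_of_subset_of_nonneg
      (Finset.Icc_subset_Icc_right (by omega)) (fun t _ _ => by positivity)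
  have hCdiff : ∀ k, k ≤ q n → |Cbar n k ω - C n k ω| ≤ d * C n (q n) ω := by
    intro k hk
    rw [hCbar, hC, ← Finset.sum_sub_distrib]
    refine (Finset.abs_sum_le_sum_abs _ _).trans ?_
    have hstep : ∀ t ∈ Finset.Icc (a n + 1) (a n + k),
        |w n t ω * (ε t ω) ^ 2 - (ε t ω) ^ 2| ≤ d * (ε t ω) ^ 2 := by
      intro t ht
      have htb : t ∈ Finset.Icc (a n + 1) (a n + q n) :=
        Finset.Icc_subset_Icc_right (by omega) ht
      have he : w n t ω * (ε t ω) ^ 2 - (ε t ω) ^ 2 = (w n t ω - 1) * (ε t ω) ^ 2 := by ring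
      rw [he, abs_mul, abs_of_nonneg (by positivity : (0:ℝ) ≤ (ε t ω) ^ 2)]
      exact mul_le_mul_of_nonneg_right (hdw t htb) (by positivity)
    calc ∑ t ∈ Finset.Icc (a n + 1) (a n + k), |w n t ω * (ε t ω) ^ 2 - (ε t ω) ^ 2|
        ≤ ∑ t ∈ Finset.Icc (a n + 1) (a n + k), d * (ε t ω) ^ 2 := Finset.sum_le_sum hstep
      _ = d * ∑ t ∈ Finset.Icc (a n + 1) (a n + k), (ε t ω) ^ 2 := by rw [Finset.mul_sum]
      _ ≤ d * C n (q n) ω := by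
          rw [hC]
          exact mul_le_mul_of_nonneg_left (Finset.sum_le_sum_of_subset_of_nonneg
            (Finset.Icc_subset_Icc_right (by omega)) (fun t _ _ => by positivity)) hd0
  have hη0 : 0 ≤ η n ω := by
    rw [hη]
    exact mul_nonneg (by positivity) (Finset.sum_nonneg fun t _ => by positivity)
  have hηdiff : |ηbar n ω - η n ω| ≤ 3 * d * η n ω := by
    rw [hηbar, hη, ← mul_sub, ← Finset.sum_sub_distrib, abs_mul,
      abs_of_nonneg (by positivity : (0:ℝ) ≤ (qr)⁻¹)]
    have hstep : ∀ t ∈ Finset.Icc (a n + 1) (a n + q n),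
        |(w n t ω) ^ 2 * (ε t ω) ^ 4 - (ε t ω) ^ 4| ≤ 3 * d * (ε t ω) ^ 4 := by
      intro t ht
      have hwd := hdw t ht
      have he : (w n t ω) ^ 2 * (ε t ω) ^ 4 - (ε t ω) ^ 4
          = ((w n t ω - 1) * (w n t ω + 1)) * (ε t ω) ^ 4 := by ring
      rw [he, abs_mul, abs_of_nonneg (by positivity : (0:ℝ) ≤ (ε t ω) ^ 4), abs_mul]
      refine mul_le_mul_of_nonneg_right ?_ (by positivity)
      have hw1 : |w n t ω + 1| ≤ 3 := by
        obtain ⟨ha1, ha2⟩ := abs_le.1 hwd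
        rw [abs_le]
        constructor <;> linarith only [ha1, ha2, hd1]
      calc |w n t ω - 1| * |w n t ω + 1| ≤ d * 3 :=
            mul_le_mul hwd hw1 (abs_nonneg _) hd0
        _ = 3 * d := by ring
    calc (qr)⁻¹ * |∑ t ∈ Finset.Icc (a n + 1) (a n + q n),
          ((w n t ω) ^ 2 * (ε t ω) ^ 4 - (ε t ω) ^ 4)|
        ≤ (qr)⁻¹ * ∑ t ∈ Finset.Icc (a n + 1) (a n + q n),
            (3 * d * (ε t ω) ^ 4) := by
          refine mul_le_mul_of_nonneg_left ?_ (by positivity)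
          exact (Finset.abs_sum_le_sum_abs _ _).trans (Finset.sum_le_sum hstep)
      _ = 3 * d * ((qr)⁻¹ * ∑ t ∈ Finset.Icc (a n + 1) (a n + q n), (ε t ω) ^ 4) := by
          rw [← Finset.mul_sum]; ring
  -- name the key quantities
  set X := (qr)⁻¹ * C n (q n) ω with hXdef
  set Y := η n ω with hYdef
  set Xb := (qr)⁻¹ * Cbar n (q n) ω with hXbdef
  set Yb := ηbar n ω with hYbdef
  have hX0 : 0 ≤ X := mul_nonneg (by positivity) (hC0 _)
  have hqrX : qr * X = C n (q n) ω := by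
    rw [hXdef, ← mul_assoc, mul_inv_cancel₀ hqrne, one_mul]
  have hXabs : |X - 1| ≤ θ := by
    rw [Real.dist_eq] at h1
    exact h1.le
  have hYabs : |Y - m4| ≤ θ := by
    rw [Real.dist_eq] at h2
    exact h2.le
  have hXbabs : |Xb - X| ≤ d * X := by
    have he : Xb - X = (qr)⁻¹ * (Cbar n (q n) ω - C n (q n) ω) := by
      rw [hXbdef, hXdef]; ring
    rw [he, abs_mul, abs_of_nonneg (by positivity : (0:ℝ) ≤ (qr)⁻¹)]
    calc (qr)⁻¹ * |Cbar n (q n) ω - C n (q n) ω| ≤ (qr)⁻¹ * (d * C n (q n) ω) :=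
          mul_le_mul_of_nonneg_left (hCdiff (q n) le_rfl) (by positivity)
      _ = d * X := by rw [hXdef]; ring
  -- bound each k and conclude
  have hFb : (⨆ k ∈ Finset.Icc 1 (q n),
      |(Real.sqrt (q n : ℝ))⁻¹ * Bbar n k ω - (Real.sqrt (q n : ℝ))⁻¹ * B n k ω|) ≤ δ / 2 := by
    refine real_biSup_le _ _ (by linarith) fun k hk => ?_
    obtain ⟨hk1, hk2⟩ := Finset.mem_Icc.1 hk
    have hkq : (k : ℝ) / qr ≤ 1 := by
      rw [div_le_one (by linarith), hqrdef]
      exact_mod_cast hk2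
    have hkq0 : (0:ℝ) ≤ (k : ℝ) / qr := by positivity
    set N := C n k ω - (k : ℝ) / qr * C n (q n) ω with hNdef
    set Nb := Cbar n k ω - (k : ℝ) / qr * Cbar n (q n) ω with hNbdef
    have hNle : |N| ≤ 2 * qr * X := by
      have h2qr : 2 * qr * X = 2 * C n (q n) ω := by
        rw [mul_assoc, hqrX]
      rw [h2qr, hNdef, abs_le]
      have hck := hCle k hk2
      have hc0 := hC0 k
      have hcq0 := hC0 (q n)
      have h6 : (k : ℝ) / qr * C n (q n) ω ≤ C n (q n) ω := by
        calc (k : ℝ) / qr * C n (q n) ω ≤ 1 * C n (q n) ω :=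
              mul_le_mul_of_nonneg_right hkq hcq0
          _ = C n (q n) ω := one_mul _
      have h7 : 0 ≤ (k : ℝ) / qr * C n (q n) ω := mul_nonneg hkq0 hcq0
      constructor
      · linarith only [h6, hc0, hcq0]
      · linarith only [hck, h7, hcq0]
    have hNdle : |Nb - N| ≤ 2 * d * qr * X := by
      have h2qr : 2 * d * qr * X = 2 * (d * C n (q n) ω) := by
        rw [show 2 * d * qr * X = 2 * d * (qr * X) by ring, hqrX]; ring
      have he : Nb - N = (Cbar n k ω - C n k ω)
          - (k : ℝ) / qr * (Cbar n (q n) ω - C n (q n) ω) := by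
        rw [hNbdef, hNdef]; ring
      rw [h2qr, he]
      refine (abs_sub _ _).trans ?_
      have e2 : |(k : ℝ) / qr * (Cbar n (q n) ω - C n (q n) ω)|
          ≤ 1 * (d * C n (q n) ω) := by
        rw [abs_mul, abs_of_nonneg hkq0]
        exact mul_le_mul hkq (hCdiff (q n) le_rfl) (abs_nonneg _) zero_le_one
      have e1 := hCdiff k hk2
      linarith
    have hkey := key_est m4 qr X Y Xb Yb N Nb d hm4gt hqr hd0 hdθ hX0 hXabs
      hη0 hYabs hXbabs hηdiff hNle hNdle
    have hBeq : (Real.sqrt (q n : ℝ))⁻¹ * Bbar n k ω - (Real.sqrt (q n : ℝ))⁻¹ * B n k ω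
        = (Real.sqrt qr)⁻¹ * (Nb / Real.sqrt (Yb - Xb ^ 2)) -
          (Real.sqrt qr)⁻¹ * (N / Real.sqrt (Y - X ^ 2)) := by
      rw [hBbar, hB]
    rw [hBeq]
    refine hkey.trans ?_
    have hKKb : (Real.sqrt qr * d) * KK ≤ σ * KK :=
      mul_le_mul_of_nonneg_right hsqd.le hKK0.le
    refine hKKb.trans ?_
    have hσ2 : σ ≤ δ / (2 * (KK + 1)) := min_le_right _ _
    have h5 : σ * KK ≤ δ / (2 * (KK + 1)) * KK :=
      mul_le_mul_of_nonneg_right hσ2 hKK0.le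
    refine h5.trans ?_
    rw [div_mul_eq_mul_div, div_le_div_iff₀ (by linarith) two_pos]
    linarith only [hδ]
  -- contradiction
  have hF0 : 0 ≤ ⨆ k ∈ Finset.Icc 1 (q n),
      |(Real.sqrt (q n : ℝ))⁻¹ * Bbar n k ω - (Real.sqrt (q n : ℝ))⁻¹ * B n k ω| :=
    Real.iSup_nonneg fun k => Real.iSup_nonneg fun _ => abs_nonneg _
  rw [Real.dist_eq, sub_zero, abs_of_nonneg hF0] at hω
  linarith
end

section
/- (Limit of the break-drift term d₂ in the proof of Proposition 3.) Fix 0 < l < 1 and s ∈ [l, 1]. Then (1/q) [ Σ_{t=a_n+⌊lq⌋+1}^{a_n+⌊sq⌋} ε_t² − (⌊sq⌋/q) Σ_{t=a_n+⌊lq⌋+1}^{a_n+q} ε_t² ] converges in probability to l(s−1) as n → ∞. -/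
open MeasureTheory ProbabilityTheory Filter Topology

lemma floor_ratio_tendsto {q : ℕ → ℕ} (hq : Tendsto q atTop atTop) {x : ℝ} (hx : 0 ≤ x) :
    Tendsto (fun n => (⌊x * (q n : ℝ)⌋₊ : ℝ) / q n) atTop (𝓝 x) := by
  have hqR : Tendsto (fun n => (q n : ℝ)) atTop atTop :=
    tendsto_natCast_atTop_atTop.comp hq
  have hqinv : Tendsto (fun n => (q n : ℝ)⁻¹) atTop (𝓝 0) := hqR.inv_tendsto_atTop
  have hlow : Tendsto (fun n => x - (q n : ℝ)⁻¹) atTop (𝓝 x) := by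
    simpa using tendsto_const_nhds.sub hqinv
  apply tendsto_of_tendsto_of_tendsto_of_le_of_le' hlow tendsto_const_nhds
  · filter_upwards [hq.eventually_ge_atTop 1] with n hn
    have hq0 : (0:ℝ) < q n := by exact_mod_cast hn
    rw [le_div_iff₀ hq0]
    have h2 : x * q n - 1 < (⌊x * (q n : ℝ)⌋₊ : ℝ) := Nat.sub_one_lt_floor _
    have h3 : (x - (q n : ℝ)⁻¹) * q n = x * q n - 1 := by field_simp
    rw [h3]; exact h2.le
  · filter_upwards [hq.eventually_ge_atTop 1] with n hn
    have hq0 : (0:ℝ) < q n := by exact_mod_cast hn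
    rw [div_le_iff₀ hq0]
    exact Nat.floor_le (by positivity)

/-- limit of the break-drift term `d₂` in the proof of Proposition 3.
For fixed `0 < l < 1` and `s ∈ [l,1]`,
`(1/q)[∑_{t=a_n+⌊lq⌋+1}^{a_n+⌊sq⌋} ε_t² − (⌊sq⌋/q) ∑_{t=a_n+⌊lq⌋+1}^{a_n+q} ε_t²]`
converges in probability to `l(s−1)`. -/
theorem break_drift_limit
    {Ω : Type*} [MeasureSpace Ω] [IsProbabilityMeasure (ℙ : Measure Ω)]
    (ε : ℕ → Ω → ℝ) (hmeas : ∀ t, Measurable (ε t))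
    (hindep : iIndepFun ε ℙ)
    (hid : ∀ t, IdentDistrib (ε t) (ε 1) ℙ ℙ)
    (hvar : ∫ ω, (ε 1 ω) ^ 2 ∂ℙ = 1)
    (hmom4 : Integrable (fun ω => (ε 1 ω) ^ 4) ℙ)
    (γ : ℝ) (hγ : γ ∈ Set.Ioo (0:ℝ) 1)
    (r : ℕ → ℝ) (hr : ∀ n, r n ∈ Set.Ioo (0:ℝ) 1)
    (a q : ℕ → ℕ)
    (ha : ∀ n, a n = ⌊r n * n⌋₊)
    (hq : ∀ n, q n = ⌊(n : ℝ) ^ γ⌋₊)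
    (h_sub : ∀ n, a n + q n ≤ n)
    (l s : ℝ) (hl : 0 < l) (hl1 : l < 1) (hs : s ∈ Set.Icc l 1) :
    TendstoInMeasure ℙ
      (fun (n : ℕ) ω => (q n : ℝ)⁻¹ *
        ((∑ t ∈ Finset.Icc (a n + ⌊l * (q n : ℝ)⌋₊ + 1) (a n + ⌊s * (q n : ℝ)⌋₊),
            (ε t ω) ^ 2) -
          (⌊s * (q n : ℝ)⌋₊ : ℝ) / (q n) *
            ∑ t ∈ Finset.Icc (a n + ⌊l * (q n : ℝ)⌋₊ + 1) (a n + q n), (ε t ω) ^ 2))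
      atTop (fun _ => l * (s - 1)) := by
  obtain ⟨hs1, hs2⟩ := hs
  -- notation
  set A : ℕ → Finset ℕ :=
    fun n => Finset.Icc (a n + ⌊l * (q n : ℝ)⌋₊ + 1) (a n + ⌊s * (q n : ℝ)⌋₊) with hA
  set B : ℕ → Finset ℕ :=
    fun n => Finset.Icc (a n + ⌊l * (q n : ℝ)⌋₊ + 1) (a n + q n) with hB
  set c : ℕ → ℝ := fun n => (⌊s * (q n : ℝ)⌋₊ : ℝ) / q n with hc
  set d : ℕ → ℕ → ℝ :=
    fun n t => (q n : ℝ)⁻¹ * ((if t ∈ A n then (1:ℝ) else 0) - c n) with hd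
  set Z : ℕ → ℕ → Ω → ℝ := fun n t ω => d n t * (ε t ω ^ 2 - 1) with hZ
  set W : ℕ → Ω → ℝ := fun n ω => ∑ t ∈ B n, Z n t ω with hW
  set μn : ℕ → ℝ :=
    fun n => (q n : ℝ)⁻¹ * (((A n).card : ℝ) - c n * ((B n).card : ℝ)) with hμn
  -- basic inequalities
  have hfls : ∀ n, ⌊l * (q n : ℝ)⌋₊ ≤ ⌊s * (q n : ℝ)⌋₊ := fun n =>
    Nat.floor_mono (mul_le_mul_of_nonneg_right hs1 (Nat.cast_nonneg _))
  have hfsq : ∀ n, ⌊s * (q n : ℝ)⌋₊ ≤ q n := by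
    intro n
    have : ⌊s * (q n : ℝ)⌋₊ ≤ ⌊((q n : ℕ) : ℝ)⌋₊ :=
      Nat.floor_mono (mul_le_of_le_one_left (Nat.cast_nonneg _) hs2)
    simpa using this
  have hAB : ∀ n, A n ⊆ B n := fun n =>
    Finset.Icc_subset_Icc le_rfl (by have := hfsq n; omega)
  have hc0 : ∀ n, 0 ≤ c n := fun n => div_nonneg (Nat.cast_nonneg _) (Nat.cast_nonneg _)
  have hc1 : ∀ n, c n ≤ 1 := fun n =>
    div_le_one_of_le₀ (by exact_mod_cast hfsq n) (Nat.cast_nonneg _)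
  have hdle : ∀ n t, |d n t| ≤ (q n : ℝ)⁻¹ := by
    intro n t
    rw [hd, abs_mul, abs_of_nonneg (by positivity : (0:ℝ) ≤ (q n : ℝ)⁻¹)]
    have h1 : |(if t ∈ A n then (1:ℝ) else 0) - c n| ≤ 1 := by
      have h2 := hc0 n; have h3 := hc1 n
      split_ifs with h <;> rw [abs_le] <;> constructor <;> linarith
    calc (q n : ℝ)⁻¹ * |(if t ∈ A n then (1:ℝ) else 0) - c n|
        ≤ (q n : ℝ)⁻¹ * 1 := mul_le_mul_of_nonneg_left h1 (by positivity)
      _ = (q n : ℝ)⁻¹ := mul_one _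
  -- L² facts
  have hX2 : ∀ t, MemLp (fun ω => ε t ω ^ 2) 2 ℙ := by
    intro t
    rw [memLp_two_iff_integrable_sq ((hmeas t).pow_const 2).aestronglyMeasurable]
    have h4 : Integrable (fun ω => ε t ω ^ 4) ℙ := by
      have := ((hid t).comp (measurable_id.pow_const 4)).integrable_iff
      exact this.mpr hmom4
    refine h4.congr (Filter.Eventually.of_forall fun ω => ?_)
    ring
  have hXmean : ∀ t, ∫ ω, ε t ω ^ 2 ∂ℙ = 1 := by
    intro t
    have h := ((hid t).comp (u := fun x : ℝ => x ^ 2) (by fun_prop)).integral_eq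
    simp only [Function.comp] at h
    exact h.trans hvar
  have hZ2 : ∀ n t, MemLp (Z n t) 2 ℙ := fun n t =>
    ((hX2 t).sub (memLp_const 1)).const_mul (d n t)
  have hZint : ∀ n t, Integrable (Z n t) ℙ := fun n t => (hZ2 n t).integrable one_le_two
  have hZmean : ∀ n t, ∫ ω, Z n t ω ∂ℙ = 0 := by
    intro n t
    rw [hZ]
    rw [integral_const_mul]
    rw [integral_sub ((hX2 t).integrable one_le_two) (integrable_const 1)]
    simp [hXmean t]
  have hWmean : ∀ n, ∫ ω, W n ω ∂ℙ = 0 := by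
    intro n
    rw [hW]
    rw [integral_finset_sum _ fun t _ => hZint n t]
    simp [hZmean]
  have hWsum : ∀ n, W n = ∑ t ∈ B n, Z n t := by
    intro n; funext ω; rw [hW]; simp [Finset.sum_apply]
  have hW2 : ∀ n, MemLp (W n) 2 ℙ := by
    intro n; rw [hWsum n]; exact memLp_finset_sum' _ fun t _ => hZ2 n t
  -- independence of the Z's
  have hZindep : ∀ n, iIndepFun (Z n) ℙ := by
    intro n
    exact hindep.comp (fun t x => d n t * (x ^ 2 - 1))
      (fun t => (measurable_const.mul ((measurable_id.pow_const 2).sub measurable_const)))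
  -- variance bound
  set V : ℝ := variance (fun ω => ε 1 ω ^ 2 - 1) ℙ with hV
  have hV0 : 0 ≤ V := variance_nonneg _ _
  have hZvar : ∀ n t, variance (Z n t) ℙ = (d n t) ^ 2 * V := by
    intro n t
    have h1 : IdentDistrib (Z n t) (fun ω => d n t * (ε 1 ω ^ 2 - 1)) ℙ ℙ :=
      (hid t).comp (u := fun x => d n t * (x ^ 2 - 1))
        (measurable_const.mul ((measurable_id.pow_const 2).sub measurable_const))
    rw [h1.variance_eq, variance_const_mul]
  have hBcard : ∀ n, (B n).card ≤ q n := by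
    intro n; rw [hB]; simp only [Nat.card_Icc]; omega
  have hWvar : ∀ n, variance (W n) ℙ ≤ V / q n := by
    intro n
    rw [hWsum n]
    rw [IndepFun.variance_sum (fun t _ => hZ2 n t)
      (fun t _ t' _ htt' => (hZindep n).indepFun htt')]
    calc ∑ t ∈ B n, variance (Z n t) ℙ
        ≤ ∑ t ∈ B n, ((q n : ℝ)⁻¹) ^ 2 * V := by
          refine Finset.sum_le_sum fun t _ => ?_
          rw [hZvar n t]
          have h1 : d n t ^ 2 ≤ ((q n : ℝ)⁻¹) ^ 2 := by
            rw [← sq_abs]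
            exact pow_le_pow_left₀ (abs_nonneg _) (hdle n t) 2
          exact mul_le_mul_of_nonneg_right h1 hV0
      _ = ((B n).card : ℝ) * (((q n : ℝ)⁻¹) ^ 2 * V) := by
          rw [Finset.sum_const, nsmul_eq_mul]
      _ ≤ (q n : ℝ) * (((q n : ℝ)⁻¹) ^ 2 * V) := by
          gcongr
          exact_mod_cast hBcard n
      _ ≤ V / q n := by
          rcases Nat.eq_zero_or_pos (q n) with h | h
          · simp [h]
          · have hq0 : (0:ℝ) < q n := by exact_mod_cast h
            have hne : (q n : ℝ) ≠ 0 := hq0.ne'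
            apply le_of_eq
            field_simp
  -- pointwise identity
  have hident : ∀ n ω,
      (q n : ℝ)⁻¹ * ((∑ t ∈ A n, ε t ω ^ 2) - c n * ∑ t ∈ B n, ε t ω ^ 2)
        = W n ω + μn n := by
    intro n ω
    have hBA : B n ∩ A n = A n := Finset.inter_eq_right.mpr (hAB n)
    have e1 : ∀ t ∈ B n, Z n t ω
        = (q n : ℝ)⁻¹ *
          ((if t ∈ A n then (ε t ω ^ 2 - 1) else 0) - c n * (ε t ω ^ 2 - 1)) := by
      intro t _
      simp only [hZ, hd]
      split_ifs with h <;> ring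
    simp only [hW, hμn]
    rw [Finset.sum_congr rfl e1, ← Finset.mul_sum, Finset.sum_sub_distrib,
      Finset.sum_ite_mem, hBA, ← Finset.mul_sum, Finset.sum_sub_distrib,
      Finset.sum_sub_distrib, Finset.sum_const, Finset.sum_const]
    simp only [nsmul_eq_mul, mul_one]
    ring
  -- deterministic limit
  have hqatTop : Tendsto q atTop atTop := by
    have h1 : Tendsto (fun n : ℕ => ((n : ℝ)) ^ γ) atTop atTop :=
      (tendsto_rpow_atTop hγ.1).comp tendsto_natCast_atTop_atTop
    have h2 : Tendsto (fun n : ℕ => ⌊((n : ℝ)) ^ γ⌋₊) atTop atTop :=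
      (tendsto_nat_floor_atTop (α := ℝ)).comp h1
    exact h2.congr fun n => (hq n).symm
  have hqR : Tendsto (fun n => (q n : ℝ)) atTop atTop :=
    tendsto_natCast_atTop_atTop.comp hqatTop
  have hqinv : Tendsto (fun n => (q n : ℝ)⁻¹) atTop (𝓝 0) := hqR.inv_tendsto_atTop
  have hrl : Tendsto (fun n => (⌊l * (q n : ℝ)⌋₊ : ℝ) / q n) atTop (𝓝 l) :=
    floor_ratio_tendsto hqatTop hl.le
  have hrs : Tendsto (fun n => (⌊s * (q n : ℝ)⌋₊ : ℝ) / q n) atTop (𝓝 s) :=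
    floor_ratio_tendsto hqatTop (hl.le.trans hs1)
  have hμlim : Tendsto μn atTop (𝓝 (l * (s - 1))) := by
    have h1 : Tendsto (fun n => (⌊l * (q n : ℝ)⌋₊ : ℝ) / q n *
        ((⌊s * (q n : ℝ)⌋₊ : ℝ) / q n - 1)) atTop (𝓝 (l * (s - 1))) :=
      hrl.mul (hrs.sub tendsto_const_nhds)
    apply Tendsto.congr' _ h1
    filter_upwards [hqatTop.eventually_ge_atTop 1] with n hn
    have hq0 : (0:ℝ) < q n := by exact_mod_cast hn
    have hcardA : ((A n).card : ℝ) = (⌊s * (q n : ℝ)⌋₊ : ℝ) - (⌊l * (q n : ℝ)⌋₊ : ℝ) := by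
      have h2 : (A n).card = ⌊s * (q n : ℝ)⌋₊ - ⌊l * (q n : ℝ)⌋₊ := by
        rw [hA]; simp only [Nat.card_Icc]; omega
      rw [h2, Nat.cast_sub (hfls n)]
    have hcardB : ((B n).card : ℝ) = ((q n : ℕ) : ℝ) - (⌊l * (q n : ℝ)⌋₊ : ℝ) := by
      have h2 : (B n).card = q n - ⌊l * (q n : ℝ)⌋₊ := by
        rw [hB]; simp only [Nat.card_Icc]
        have := (hfls n).trans (hfsq n); omega
      rw [h2, Nat.cast_sub ((hfls n).trans (hfsq n))]
    have hne : (q n : ℝ) ≠ 0 := hq0.ne'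
    simp only [hμn, hc]
    rw [hcardA, hcardB]
    field_simp
    ring
  -- main argument
  rw [tendstoInMeasure_iff_dist]
  intro e he
  have hmain : Tendsto (fun n => ENNReal.ofReal ((V / q n) / (e / 2) ^ 2)) atTop (𝓝 0) := by
    have h1 : Tendsto (fun n => (V / q n) / (e / 2) ^ 2) atTop (𝓝 0) := by
      have h2 : Tendsto (fun n => V * (q n : ℝ)⁻¹) atTop (𝓝 (V * 0)) := hqinv.const_mul V
      have h3 : Tendsto (fun n => V / (q n : ℝ)) atTop (𝓝 0) := by
        simpa [div_eq_mul_inv] using h2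
      simpa using h3.div_const ((e / 2) ^ 2)
    simpa using (ENNReal.tendsto_ofReal h1)
  apply tendsto_of_tendsto_of_tendsto_of_le_of_le' tendsto_const_nhds hmain
  · exact Eventually.of_forall fun n => zero_le
  · have hμe : ∀ᶠ n in atTop, dist (μn n) (l * (s - 1)) < e / 2 :=
      (Metric.tendsto_nhds.mp hμlim) (e / 2) (by positivity)
    filter_upwards [hμe] with n hn
    have hsubset :
        {ω | e ≤ dist ((q n : ℝ)⁻¹ *
            ((∑ t ∈ A n, ε t ω ^ 2) - c n * ∑ t ∈ B n, ε t ω ^ 2)) (l * (s - 1))}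
          ⊆ {ω | e / 2 ≤ |W n ω - ∫ x, W n x ∂ℙ|} := by
      intro ω hω
      simp only [Set.mem_setOf_eq] at hω ⊢
      rw [hWmean n, sub_zero]
      rw [Real.dist_eq] at hω hn
      have h1 := hident n ω
      have h2 : W n ω = ((q n : ℝ)⁻¹ *
          ((∑ t ∈ A n, ε t ω ^ 2) - c n * ∑ t ∈ B n, ε t ω ^ 2) - l * (s - 1))
          - (μn n - l * (s - 1)) := by rw [h1]; ring
      rw [h2]
      have h3 := abs_sub_abs_le_abs_sub
        ((q n : ℝ)⁻¹ * ((∑ t ∈ A n, ε t ω ^ 2) - c n * ∑ t ∈ B n, ε t ω ^ 2) - l * (s - 1))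
        (μn n - l * (s - 1))
      have h4 := abs_abs_sub_abs_le_abs_sub
        ((q n : ℝ)⁻¹ * ((∑ t ∈ A n, ε t ω ^ 2) - c n * ∑ t ∈ B n, ε t ω ^ 2) - l * (s - 1))
        (μn n - l * (s - 1))
      calc e / 2 = e - e / 2 := by ring
        _ ≤ _ := by
            have h5 := abs_sub_abs_le_abs_sub
              ((q n : ℝ)⁻¹ * ((∑ t ∈ A n, ε t ω ^ 2) - c n * ∑ t ∈ B n, ε t ω ^ 2)
                - l * (s - 1)) (μn n - l * (s - 1))
            linarith [h5, hω, hn]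
    calc ℙ {ω | e ≤ dist ((q n : ℝ)⁻¹ *
            ((∑ t ∈ A n, ε t ω ^ 2) - c n * ∑ t ∈ B n, ε t ω ^ 2)) (l * (s - 1))}
        ≤ ℙ {ω | e / 2 ≤ |W n ω - ∫ x, W n x ∂ℙ|} := measure_mono hsubset
      _ ≤ ENNReal.ofReal (variance (W n) ℙ / (e / 2) ^ 2) :=
          meas_ge_le_variance_div_sq (hW2 n) (by positivity)
      _ ≤ ENNReal.ofReal ((V / q n) / (e / 2) ^ 2) := by
          apply ENNReal.ofReal_le_ofReal
          have h := hWvar n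
          gcongr
end

section
/- (Limits of the denominator terms d₃ and d₄ in the proof of Proposition 3.) Let v : (0,1] → ℝ be Lipschitz with 0 < v(r) and sup_{r∈(0,1]} |v(r)| < ∞, let α ∈ ℝ and l ∈ (0,1), and suppose a_n/n → r⁰ ∈ (0,1) and q/n → 0. Then, as n → ∞, (1/q) Σ_{t=a_n+1}^{a_n+q} ( v(t/n) + α·1_{t ≥ a_n+⌊lq⌋+1} )² ε_t⁴ converges in probability to E[ε_1⁴]·( v(r⁰)² + α(1−l)(α + 2 v(r⁰)) ), and (1/q) Σ_{t=a_n+1}^{a_n+q} ( v(t/n) + α·1_{t ≥ a_n+⌊lq⌋+1} ) ε_t² converges in probability to v(r⁰) + α(1−l). -/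
open MeasureTheory ProbabilityTheory Filter Finset Topology

section Helpers
variable {Ω : Type*} [MeasureSpace Ω] [IsProbabilityMeasure (ℙ : Measure Ω)]

lemma identDistrib_add' {X X' Y Y' : Ω → ℝ}
    (hX : AEMeasurable X ℙ) (hY : AEMeasurable Y ℙ)
    (hX' : AEMeasurable X' ℙ) (hY' : AEMeasurable Y' ℙ)
    (hXY : IndepFun X Y ℙ) (hXY' : IndepFun X' Y' ℙ)
    (h1 : IdentDistrib X X' ℙ ℙ) (h2 : IdentDistrib Y Y' ℙ ℙ) :
    IdentDistrib (fun ω => X ω + Y ω) (fun ω => X' ω + Y' ω) ℙ ℙ := by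
  have hp : IdentDistrib (fun ω => (X ω, Y ω)) (fun ω => (X' ω, Y' ω)) ℙ ℙ :=
    ⟨hX.prodMk hY, hX'.prodMk hY', by
      rw [(indepFun_iff_map_prod_eq_prod_map_map hX hY).1 hXY,
        (indepFun_iff_map_prod_eq_prod_map_map hX' hY').1 hXY', h1.map_eq, h2.map_eq]⟩
  exact hp.comp measurable_add

lemma identDistrib_sum_Icc_range (Y : ℕ → Ω → ℝ) (hYm : ∀ i, Measurable (Y i))
    (hYindep : iIndepFun Y ℙ)
    (hYid : ∀ i j, IdentDistrib (Y i) (Y j) ℙ ℙ) (m b : ℕ) :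
    IdentDistrib (fun ω => ∑ t ∈ Finset.Icc (b+1) (b+m), Y t ω)
      (fun ω => ∑ i ∈ Finset.range m, Y i ω) ℙ ℙ := by
  induction m with
  | zero => simpa using IdentDistrib.refl aemeasurable_const
  | succ m ih =>
    have hnm1 : b + m + 1 ∉ Finset.Icc (b+1) (b+m) := by
      simp [Finset.mem_Icc]
    have hnm2 : m ∉ Finset.range m := Finset.notMem_range_self
    have e1 : Finset.Icc (b+1) (b+(m+1)) = insert (b+m+1) (Finset.Icc (b+1) (b+m)) := by
      ext x; simp only [Finset.mem_Icc, Finset.mem_insert]; omega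
    have e2 : Finset.range (m+1) = insert m (Finset.range m) := Finset.range_add_one
    have i1 : IndepFun (fun ω => ∑ t ∈ Finset.Icc (b+1) (b+m), Y t ω) (Y (b+m+1)) ℙ := by
      have h := hYindep.indepFun_finsetSum_of_notMem hYm hnm1
      have e : (∑ j ∈ Finset.Icc (b+1) (b+m), Y j)
          = fun ω => ∑ t ∈ Finset.Icc (b+1) (b+m), Y t ω :=
        funext fun ω => Finset.sum_apply ω _ _
      rwa [e] at h
    have i2 : IndepFun (fun ω => ∑ i ∈ Finset.range m, Y i ω) (Y m) ℙ := by
      have h := hYindep.indepFun_finsetSum_of_notMem hYm hnm2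
      have e : (∑ j ∈ Finset.range m, Y j)
          = fun ω => ∑ i ∈ Finset.range m, Y i ω :=
        funext fun ω => Finset.sum_apply ω _ _
      rwa [e] at h
    have hmsum1 : AEMeasurable (fun ω => ∑ t ∈ Finset.Icc (b+1) (b+m), Y t ω) ℙ :=
      (Finset.measurable_sum _ (fun i _ => hYm i)).aemeasurable
    have hmsum2 : AEMeasurable (fun ω => ∑ i ∈ Finset.range m, Y i ω) ℙ :=
      (Finset.measurable_sum _ (fun i _ => hYm i)).aemeasurable
    have key := identDistrib_add' hmsum1 (hYm (b+m+1)).aemeasurable hmsum2 (hYm m).aemeasurable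
      i1 i2 ih (hYid (b+m+1) m)
    simp only [e1, e2]
    rw [show (fun ω => ∑ t ∈ insert (b+m+1) (Finset.Icc (b+1) (b+m)), Y t ω)
        = fun ω => (∑ t ∈ Finset.Icc (b+1) (b+m), Y t ω) + Y (b+m+1) ω from
          funext fun ω => by rw [Finset.sum_insert hnm1]; ring,
      show (fun ω => ∑ i ∈ insert m (Finset.range m), Y i ω)
        = fun ω => (∑ i ∈ Finset.range m, Y i ω) + Y m ω from
          funext fun ω => by rw [Finset.sum_insert hnm2]; ring]
    exact key

lemma lln_L1 (Y : ℕ → Ω → ℝ) (hYm : ∀ i, Measurable (Y i))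
    (hYindep : iIndepFun Y ℙ)
    (hYid : ∀ i j, IdentDistrib (Y i) (Y j) ℙ ℙ)
    (hYint : Integrable (Y 0) ℙ) :
    Tendsto (fun m : ℕ => ∫ ω, |(m:ℝ)⁻¹ * (∑ i ∈ Finset.range m, Y i ω) - ∫ ω', Y 0 ω' ∂ℙ| ∂ℙ)
      atTop (𝓝 0) := by
  have hpair : Pairwise (Function.onFun (IndepFun · · ℙ) Y) := fun i j hij =>
    hYindep.indepFun hij
  have hLp := strong_law_Lp (le_refl 1) (by norm_num) Y (memLp_one_iff_integrable.2 hYint)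
    hpair (fun i => hYid i 0)
  have hint : ∀ m : ℕ, Integrable
      (fun ω => (m:ℝ)⁻¹ * (∑ i ∈ Finset.range m, Y i ω) - ∫ ω', Y 0 ω' ∂ℙ) ℙ := by
    intro m
    exact (((integrable_finset_sum _ (fun i _ => (hYid i 0).integrable_iff.2 hYint)).const_mul
      _).sub (integrable_const _))
  have heq : ∀ m : ℕ, ∫ ω, |(m:ℝ)⁻¹ * (∑ i ∈ Finset.range m, Y i ω) - ∫ ω', Y 0 ω' ∂ℙ| ∂ℙ
      = (eLpNorm (fun ω => (m:ℝ)⁻¹ • (∑ i ∈ Finset.range m, Y i ω) - ∫ ω', Y 0 ω' ∂ℙ) 1 ℙ).toReal := by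
    intro m
    rw [eLpNorm_one_eq_lintegral_enorm]
    rw [show ∫ ω, |(m:ℝ)⁻¹ * (∑ i ∈ Finset.range m, Y i ω) - ∫ ω', Y 0 ω' ∂ℙ| ∂ℙ
        = ∫ ω, ‖(m:ℝ)⁻¹ • (∑ i ∈ Finset.range m, Y i ω) - ∫ ω', Y 0 ω' ∂ℙ‖ ∂ℙ by
      simp [Real.norm_eq_abs, smul_eq_mul]]
    exact integral_norm_eq_lintegral_enorm (by
      simpa [smul_eq_mul] using (hint m).1)
  rw [show (fun m : ℕ => ∫ ω, |(m:ℝ)⁻¹ * (∑ i ∈ Finset.range m, Y i ω) - ∫ ω', Y 0 ω' ∂ℙ| ∂ℙ)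
      = fun m : ℕ => (eLpNorm (fun ω => (m:ℝ)⁻¹ • (∑ i ∈ Finset.range m, Y i ω)
          - ∫ ω', Y 0 ω' ∂ℙ) 1 ℙ).toReal from funext heq]
  have := (ENNReal.tendsto_toReal (by norm_num : (0:ENNReal) ≠ ⊤)).comp hLp
  simpa [Function.comp_def] using this

lemma tendstoInMeasure_of_integral_abs {g : ℕ → Ω → ℝ} {c : ℝ}
    (hint : ∀ n, Integrable (fun ω => g n ω - c) ℙ)
    (h : Tendsto (fun n => ∫ ω, |g n ω - c| ∂ℙ) atTop (𝓝 0)) :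
    TendstoInMeasure ℙ g atTop (fun _ => c) := by
  rw [tendstoInMeasure_iff_dist]
  intro δ hδ
  have hδ' : ENNReal.ofReal δ ≠ 0 := by
    simp [ENNReal.ofReal_eq_zero, not_le, hδ]
  have key : ∀ n, ℙ {x | δ ≤ dist (g n x) c}
      ≤ (ENNReal.ofReal δ)⁻¹ * ENNReal.ofReal (∫ ω, |g n ω - c| ∂ℙ) := by
    intro n
    have hae : AEMeasurable (fun ω => ENNReal.ofReal |g n ω - c|) ℙ :=
      ((hint n).abs.aemeasurable).ennreal_ofReal
    have hmarkov := mul_meas_ge_le_lintegral₀ hae (ENNReal.ofReal δ)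
    have hset : {x | δ ≤ dist (g n x) c} = {x | ENNReal.ofReal δ ≤ ENNReal.ofReal |g n x - c|} := by
      ext x
      simp only [Set.mem_setOf_eq, Real.dist_eq]
      rw [ENNReal.ofReal_le_ofReal_iff (abs_nonneg _)]
    have hlint : ∫⁻ ω, ENNReal.ofReal |g n ω - c| ∂ℙ = ENNReal.ofReal (∫ ω, |g n ω - c| ∂ℙ) :=
      (ofReal_integral_eq_lintegral_ofReal (hint n).abs
        (Filter.Eventually.of_forall fun ω => abs_nonneg _)).symm
    calc ℙ {x | δ ≤ dist (g n x) c}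
        = (ENNReal.ofReal δ)⁻¹ * (ENNReal.ofReal δ * ℙ {x | ENNReal.ofReal δ ≤ ENNReal.ofReal |g n x - c|}) := by
          rw [← mul_assoc, ENNReal.inv_mul_cancel hδ' ENNReal.ofReal_ne_top, one_mul, hset]
      _ ≤ (ENNReal.ofReal δ)⁻¹ * ∫⁻ ω, ENNReal.ofReal |g n ω - c| ∂ℙ := by
          exact mul_le_mul_right hmarkov _
      _ = (ENNReal.ofReal δ)⁻¹ * ENNReal.ofReal (∫ ω, |g n ω - c| ∂ℙ) := by rw [hlint]
  have hlim : Tendsto (fun n => (ENNReal.ofReal δ)⁻¹ * ENNReal.ofReal (∫ ω, |g n ω - c| ∂ℙ))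
      atTop (𝓝 0) := by
    have h1 : Tendsto (fun n => ENNReal.ofReal (∫ ω, |g n ω - c| ∂ℙ)) atTop (𝓝 0) := by
      simpa using ENNReal.tendsto_ofReal h
    have := ENNReal.Tendsto.const_mul h1 (Or.inr (ENNReal.inv_ne_top.2 hδ'))
    simpa using this
  exact tendsto_of_tendsto_of_tendsto_of_le_of_le' tendsto_const_nhds hlim
    (Filter.Eventually.of_forall fun n => zero_le)
    (Filter.Eventually.of_forall key)

lemma block_L1 (Y : ℕ → Ω → ℝ) (hYm : ∀ i, Measurable (Y i))
    (hYindep : iIndepFun Y ℙ)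
    (hYid : ∀ i j, IdentDistrib (Y i) (Y j) ℙ ℙ)
    (hYint : Integrable (Y 0) ℙ)
    (bb len : ℕ → ℕ) (hlen : Tendsto len atTop atTop) :
    Tendsto (fun n => ∫ ω, |(len n:ℝ)⁻¹ * (∑ t ∈ Finset.Icc (bb n + 1) (bb n + len n), Y t ω)
        - ∫ ω', Y 0 ω' ∂ℙ| ∂ℙ) atTop (𝓝 0) := by
  have heq : ∀ n, ∫ ω, |(len n:ℝ)⁻¹ * (∑ t ∈ Finset.Icc (bb n + 1) (bb n + len n), Y t ω)
        - ∫ ω', Y 0 ω' ∂ℙ| ∂ℙ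
      = ∫ ω, |(len n:ℝ)⁻¹ * (∑ i ∈ Finset.range (len n), Y i ω) - ∫ ω', Y 0 ω' ∂ℙ| ∂ℙ := by
    intro n
    have hI := identDistrib_sum_Icc_range Y hYm hYindep hYid (len n) (bb n)
    have hu : Measurable (fun x : ℝ => |(len n:ℝ)⁻¹ * x - ∫ ω', Y 0 ω' ∂ℙ|) :=
      ((measurable_const.mul measurable_id).sub measurable_const).abs
    exact (hI.comp hu).integral_eq
  rw [show (fun n => ∫ ω, |(len n:ℝ)⁻¹ * (∑ t ∈ Finset.Icc (bb n + 1) (bb n + len n), Y t ω)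
        - ∫ ω', Y 0 ω' ∂ℙ| ∂ℙ)
      = (fun m : ℕ => ∫ ω, |(m:ℝ)⁻¹ * (∑ i ∈ Finset.range m, Y i ω) - ∫ ω', Y 0 ω' ∂ℙ| ∂ℙ) ∘ len
      from funext fun n => heq n]
  exact (lln_L1 Y hYm hYindep hYid hYint).comp hlen

lemma master (Y : ℕ → Ω → ℝ) (hYm : ∀ i, Measurable (Y i))
    (hYindep : iIndepFun Y ℙ)
    (hYid : ∀ i j, IdentDistrib (Y i) (Y j) ℙ ℙ)
    (hYint : Integrable (Y 0) ℙ)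
    (b qq mm : ℕ → ℕ) (c : ℕ → ℕ → ℝ) (C1 C2 lp : ℝ) (δ : ℕ → ℝ)
    (hmle : ∀ n, mm n ≤ qq n)
    (hq_inf : Tendsto qq atTop atTop)
    (hm_inf : Tendsto mm atTop atTop)
    (hk_inf : Tendsto (fun n => qq n - mm n) atTop atTop)
    (hfrac : Tendsto (fun n => (mm n : ℝ) / qq n) atTop (𝓝 lp))
    (hδ : Tendsto δ atTop (𝓝 0)) (hδ0 : ∀ n, 0 ≤ δ n)
    (hc1 : ∀ᶠ n in atTop, ∀ t ∈ Finset.Icc (b n + 1) (b n + mm n), |c n t - C1| ≤ δ n)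
    (hc2 : ∀ᶠ n in atTop, ∀ t ∈ Finset.Icc (b n + mm n + 1) (b n + qq n), |c n t - C2| ≤ δ n) :
    TendstoInMeasure ℙ
      (fun n ω => (qq n : ℝ)⁻¹ * ∑ t ∈ Finset.Icc (b n + 1) (b n + qq n), c n t * Y t ω)
      atTop (fun _ => (lp * C1 + (1 - lp) * C2) * ∫ ω, Y 0 ω ∂ℙ) := by
  set μY := ∫ ω, Y 0 ω ∂ℙ with hμY
  set EA := ∫ ω, |Y 0 ω| ∂ℙ with hEA
  set kk : ℕ → ℕ := fun n => qq n - mm n with hkkdef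
  have hkkn : ∀ n, kk n = qq n - mm n := fun _ => rfl
  set L : ℝ := (lp * C1 + (1 - lp) * C2) * μY with hL
  have IntY : ∀ t, Integrable (Y t) ℙ := fun t => (hYid t 0).integrable_iff.2 hYint
  have EabsY : ∀ t, ∫ ω, |Y t ω| ∂ℙ = EA := fun t =>
    ((hYid t 0).comp measurable_abs).integral_eq
  set err1 : ℕ → ℝ := fun n =>
    ∫ ω, |(mm n:ℝ)⁻¹ * (∑ t ∈ Finset.Icc (b n + 1) (b n + mm n), Y t ω) - μY| ∂ℙ with herr1def
  set err2 : ℕ → ℝ := fun n =>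
    ∫ ω, |(kk n:ℝ)⁻¹ * (∑ t ∈ Finset.Icc ((b n + mm n) + 1) ((b n + mm n) + kk n), Y t ω) - μY| ∂ℙ
    with herr2def
  have herr1 : Tendsto err1 atTop (𝓝 0) := block_L1 Y hYm hYindep hYid hYint b mm hm_inf
  have herr2 : Tendsto err2 atTop (𝓝 0) :=
    block_L1 Y hYm hYindep hYid hYint (fun n => b n + mm n) kk hk_inf
  have hfrac2 : Tendsto (fun n => (kk n : ℝ) / qq n) atTop (𝓝 (1 - lp)) := by
    have he : ∀ᶠ n in atTop, 1 - (mm n:ℝ)/qq n = (kk n:ℝ)/qq n := by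
      filter_upwards [hq_inf.eventually_ge_atTop 1] with n hq1
      have hq0 : (qq n : ℝ) ≠ 0 := by positivity
      rw [hkkn n, Nat.cast_sub (hmle n)]
      field_simp
    exact Tendsto.congr' he (by simpa using tendsto_const_nhds.sub hfrac)
  have habs1 : Tendsto (fun n => |(mm n:ℝ)/qq n - lp|) atTop (𝓝 0) := by
    have := (hfrac.sub_const lp).abs
    simpa using this
  have habs2 : Tendsto (fun n => |(kk n:ℝ)/qq n - (1 - lp)|) atTop (𝓝 0) := by
    have := (hfrac2.sub_const (1 - lp)).abs
    simpa using this
  set B : ℕ → ℝ := fun n => δ n * EA + |C1| * (err1 n + |(mm n:ℝ)/qq n - lp| * |μY|)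
      + |C2| * (err2 n + |(kk n:ℝ)/qq n - (1 - lp)| * |μY|) with hBdef
  have hBlim : Tendsto B atTop (𝓝 0) := by
    have h0 : Tendsto B atTop (𝓝 (0 * EA + |C1| * (0 + 0 * |μY|) + |C2| * (0 + 0 * |μY|))) :=
      ((hδ.mul_const EA).add ((herr1.add (habs1.mul_const _)).const_mul _)).add
        ((herr2.add (habs2.mul_const _)).const_mul _)
    simpa using h0
  have Ig : ∀ n, Integrable (fun ω =>
      (qq n : ℝ)⁻¹ * ∑ t ∈ Finset.Icc (b n + 1) (b n + qq n), c n t * Y t ω - L) ℙ := by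
    intro n
    exact ((integrable_finset_sum _ (fun t _ => (IntY t).const_mul _)).const_mul _).sub
      (integrable_const _)
  apply tendstoInMeasure_of_integral_abs Ig
  have hbound : ∀ᶠ n in atTop,
      ∫ ω, |(qq n : ℝ)⁻¹ * ∑ t ∈ Finset.Icc (b n + 1) (b n + qq n), c n t * Y t ω - L| ∂ℙ
        ≤ B n := by
    filter_upwards [hc1, hc2, hq_inf.eventually_ge_atTop 1, hm_inf.eventually_ge_atTop 1,
      hk_inf.eventually_ge_atTop 1] with n hC1 hC2 hq1 hm1 hk1
    have hk1' : 1 ≤ kk n := hk1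
    have hq0 : (0:ℝ) < qq n := by exact_mod_cast hq1
    have hm0 : (0:ℝ) < mm n := by exact_mod_cast hm1
    have hk0 : (0:ℝ) < (kk n : ℝ) := by exact_mod_cast hk1'
    have hq0' : (qq n:ℝ) ≠ 0 := ne_of_gt hq0
    have hm0' : (mm n:ℝ) ≠ 0 := ne_of_gt hm0
    have hk0' : (kk n:ℝ) ≠ 0 := ne_of_gt hk0
    have hsplitn : b n + qq n = (b n + mm n) + kk n := by
      have := hmle n; rw [hkkn n]; omega
    have hmkq : (mm n : ℝ) + (kk n : ℝ) = (qq n : ℝ) := by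
      rw [hkkn n, Nat.cast_sub (hmle n)]; ring
    set B1 : Finset ℕ := Finset.Icc (b n + 1) (b n + mm n) with hB1
    set B2 : Finset ℕ := Finset.Icc ((b n + mm n) + 1) ((b n + mm n) + kk n) with hB2
    have hdisj : Disjoint B1 B2 := by
      rw [hB1, hB2, Finset.disjoint_left]
      intro x hx1 hx2
      simp only [Finset.mem_Icc] at hx1 hx2
      omega
    have hun : Finset.Icc (b n + 1) (b n + qq n) = B1 ∪ B2 := by
      rw [hB1, hB2]
      ext x
      simp only [Finset.mem_Icc, Finset.mem_union]
      omega
    have hsum_split : ∀ ω : Ω, (∑ t ∈ Finset.Icc (b n + 1) (b n + qq n), c n t * Y t ω)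
        = (∑ t ∈ B1, c n t * Y t ω) + (∑ t ∈ B2, c n t * Y t ω) := by
      intro ω
      rw [hun, Finset.sum_union hdisj]
    set S1 : Ω → ℝ := fun ω => ∑ t ∈ B1, Y t ω with hS1
    set S2 : Ω → ℝ := fun ω => ∑ t ∈ B2, Y t ω with hS2
    set D1 : Ω → ℝ := fun ω => (mm n:ℝ)⁻¹ * S1 ω - μY with hD1
    set D2 : Ω → ℝ := fun ω => (kk n:ℝ)⁻¹ * S2 ω - μY with hD2
    set H : Ω → ℝ := fun ω =>
      δ n * ((qq n:ℝ)⁻¹ * ∑ t ∈ B1, |Y t ω|) + δ n * ((qq n:ℝ)⁻¹ * ∑ t ∈ B2, |Y t ω|)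
      + |C1| * |D1 ω| + |C2| * |D2 ω|
      + (|C1| * |(mm n:ℝ)/qq n - lp| + |C2| * |(kk n:ℝ)/qq n - (1 - lp)|) * |μY| with hH
    have hpt : ∀ ω, |(qq n : ℝ)⁻¹ * ∑ t ∈ Finset.Icc (b n + 1) (b n + qq n), c n t * Y t ω - L|
        ≤ H ω := by
      intro ω
      have hident : (qq n : ℝ)⁻¹ * (∑ t ∈ Finset.Icc (b n + 1) (b n + qq n), c n t * Y t ω) - L
          = (qq n:ℝ)⁻¹ * (∑ t ∈ B1, (c n t - C1) * Y t ω)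
            + (qq n:ℝ)⁻¹ * (∑ t ∈ B2, (c n t - C2) * Y t ω)
            + C1 * ((mm n:ℝ)/qq n) * D1 ω + C2 * ((kk n:ℝ)/qq n) * D2 ω
            + (C1 * ((mm n:ℝ)/qq n - lp) + C2 * ((kk n:ℝ)/qq n - (1 - lp))) * μY := by
        rw [hsum_split ω]
        have e1 : (∑ t ∈ B1, c n t * Y t ω)
            = (∑ t ∈ B1, (c n t - C1) * Y t ω) + C1 * S1 ω := by
          rw [hS1, Finset.mul_sum, ← Finset.sum_add_distrib]
          exact Finset.sum_congr rfl fun t _ => by ring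
        have e2 : (∑ t ∈ B2, c n t * Y t ω)
            = (∑ t ∈ B2, (c n t - C2) * Y t ω) + C2 * S2 ω := by
          rw [hS2, Finset.mul_sum, ← Finset.sum_add_distrib]
          exact Finset.sum_congr rfl fun t _ => by ring
        rw [e1, e2]
        simp only [hD1, hD2, hL]
        field_simp
        ring
      rw [hident]
      have b1 : |(qq n:ℝ)⁻¹ * (∑ t ∈ B1, (c n t - C1) * Y t ω)|
          ≤ δ n * ((qq n:ℝ)⁻¹ * ∑ t ∈ B1, |Y t ω|) := by
        rw [abs_mul, abs_of_nonneg (by positivity : (0:ℝ) ≤ (qq n:ℝ)⁻¹), mul_left_comm]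
        apply mul_le_mul_of_nonneg_left _ (by positivity : (0:ℝ) ≤ (qq n:ℝ)⁻¹)
        calc |∑ t ∈ B1, (c n t - C1) * Y t ω| ≤ ∑ t ∈ B1, |(c n t - C1) * Y t ω| :=
              Finset.abs_sum_le_sum_abs _ _
          _ ≤ ∑ t ∈ B1, δ n * |Y t ω| := Finset.sum_le_sum fun t ht => by
              rw [abs_mul]
              exact mul_le_mul_of_nonneg_right (hC1 t ht) (abs_nonneg _)
          _ = δ n * ∑ t ∈ B1, |Y t ω| := by rw [Finset.mul_sum]
      have b2 : |(qq n:ℝ)⁻¹ * (∑ t ∈ B2, (c n t - C2) * Y t ω)|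
          ≤ δ n * ((qq n:ℝ)⁻¹ * ∑ t ∈ B2, |Y t ω|) := by
        rw [abs_mul, abs_of_nonneg (by positivity : (0:ℝ) ≤ (qq n:ℝ)⁻¹), mul_left_comm]
        apply mul_le_mul_of_nonneg_left _ (by positivity : (0:ℝ) ≤ (qq n:ℝ)⁻¹)
        calc |∑ t ∈ B2, (c n t - C2) * Y t ω| ≤ ∑ t ∈ B2, |(c n t - C2) * Y t ω| :=
              Finset.abs_sum_le_sum_abs _ _
          _ ≤ ∑ t ∈ B2, δ n * |Y t ω| := Finset.sum_le_sum fun t ht => by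
              rw [abs_mul]
              refine mul_le_mul_of_nonneg_right (hC2 t ?_) (abs_nonneg _)
              rw [hB2] at ht
              rwa [hsplitn]
          _ = δ n * ∑ t ∈ B2, |Y t ω| := by rw [Finset.mul_sum]
      have b3 : |C1 * ((mm n:ℝ)/qq n) * D1 ω| ≤ |C1| * |D1 ω| := by
        rw [abs_mul, abs_mul]
        have h1 : |(mm n:ℝ)/qq n| ≤ 1 := by
          rw [abs_of_nonneg (by positivity), div_le_one hq0]
          exact_mod_cast hmle n
        calc |C1| * |(mm n:ℝ)/qq n| * |D1 ω| ≤ |C1| * 1 * |D1 ω| :=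
              mul_le_mul_of_nonneg_right (mul_le_mul_of_nonneg_left h1 (abs_nonneg _))
                (abs_nonneg _)
          _ = |C1| * |D1 ω| := by ring
      have b4 : |C2 * ((kk n:ℝ)/qq n) * D2 ω| ≤ |C2| * |D2 ω| := by
        rw [abs_mul, abs_mul]
        have h1 : |(kk n:ℝ)/qq n| ≤ 1 := by
          rw [abs_of_nonneg (by positivity), div_le_one hq0]
          linarith
        calc |C2| * |(kk n:ℝ)/qq n| * |D2 ω| ≤ |C2| * 1 * |D2 ω| :=
              mul_le_mul_of_nonneg_right (mul_le_mul_of_nonneg_left h1 (abs_nonneg _))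
                (abs_nonneg _)
          _ = |C2| * |D2 ω| := by ring
      have b5 : |(C1 * ((mm n:ℝ)/qq n - lp) + C2 * ((kk n:ℝ)/qq n - (1 - lp))) * μY|
          ≤ (|C1| * |(mm n:ℝ)/qq n - lp| + |C2| * |(kk n:ℝ)/qq n - (1 - lp)|) * |μY| := by
        rw [abs_mul]
        apply mul_le_mul_of_nonneg_right _ (abs_nonneg _)
        calc |C1 * ((mm n:ℝ)/qq n - lp) + C2 * ((kk n:ℝ)/qq n - (1 - lp))|
            ≤ |C1 * ((mm n:ℝ)/qq n - lp)| + |C2 * ((kk n:ℝ)/qq n - (1 - lp))| := abs_add_le _ _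
          _ = |C1| * |(mm n:ℝ)/qq n - lp| + |C2| * |(kk n:ℝ)/qq n - (1 - lp)| := by
              rw [abs_mul, abs_mul]
      calc |(qq n:ℝ)⁻¹ * (∑ t ∈ B1, (c n t - C1) * Y t ω)
            + (qq n:ℝ)⁻¹ * (∑ t ∈ B2, (c n t - C2) * Y t ω)
            + C1 * ((mm n:ℝ)/qq n) * D1 ω + C2 * ((kk n:ℝ)/qq n) * D2 ω
            + (C1 * ((mm n:ℝ)/qq n - lp) + C2 * ((kk n:ℝ)/qq n - (1 - lp))) * μY|
          ≤ |(qq n:ℝ)⁻¹ * (∑ t ∈ B1, (c n t - C1) * Y t ω)|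
            + |(qq n:ℝ)⁻¹ * (∑ t ∈ B2, (c n t - C2) * Y t ω)|
            + |C1 * ((mm n:ℝ)/qq n) * D1 ω| + |C2 * ((kk n:ℝ)/qq n) * D2 ω|
            + |(C1 * ((mm n:ℝ)/qq n - lp) + C2 * ((kk n:ℝ)/qq n - (1 - lp))) * μY| :=
            (abs_add_le _ _).trans (add_le_add ((abs_add_le _ _).trans (add_le_add
              ((abs_add_le _ _).trans (add_le_add (abs_add_le _ _) le_rfl)) le_rfl)) le_rfl)
        _ ≤ H ω := add_le_add (add_le_add (add_le_add (add_le_add b1 b2) b3) b4) b5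
    -- integrability of the pieces
    have I1 : Integrable (fun ω => δ n * ((qq n:ℝ)⁻¹ * ∑ t ∈ B1, |Y t ω|)) ℙ :=
      (((integrable_finset_sum _ (fun t _ => (IntY t).abs)).const_mul _).const_mul _)
    have I2 : Integrable (fun ω => δ n * ((qq n:ℝ)⁻¹ * ∑ t ∈ B2, |Y t ω|)) ℙ :=
      (((integrable_finset_sum _ (fun t _ => (IntY t).abs)).const_mul _).const_mul _)
    have ID1 : Integrable D1 ℙ := by
      rw [hD1]
      exact ((integrable_finset_sum _ (fun t _ => IntY t)).const_mul _).sub (integrable_const _)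
    have ID2 : Integrable D2 ℙ := by
      rw [hD2]
      exact ((integrable_finset_sum _ (fun t _ => IntY t)).const_mul _).sub (integrable_const _)
    have I3 : Integrable (fun ω => |C1| * |D1 ω|) ℙ := ID1.abs.const_mul _
    have I4 : Integrable (fun ω => |C2| * |D2 ω|) ℙ := ID2.abs.const_mul _
    have I5 : Integrable (fun _ : Ω =>
        (|C1| * |(mm n:ℝ)/qq n - lp| + |C2| * |(kk n:ℝ)/qq n - (1 - lp)|) * |μY|) ℙ :=
      integrable_const _
    have hHint : Integrable H ℙ := by
      rw [hH]
      exact (((I1.add I2).add I3).add I4).add I5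
    have hIle : ∫ ω, |(qq n : ℝ)⁻¹ * ∑ t ∈ Finset.Icc (b n + 1) (b n + qq n), c n t * Y t ω - L| ∂ℙ
        ≤ ∫ ω, H ω ∂ℙ := integral_mono (Ig n).abs hHint hpt
    -- value of ∫ H
    have hcard1 : B1.card = mm n := by rw [hB1, Nat.card_Icc]; omega
    have hcard2 : B2.card = kk n := by rw [hB2, Nat.card_Icc]; omega
    have hsum1 : ∫ ω, (∑ t ∈ B1, |Y t ω|) ∂ℙ = (mm n : ℝ) * EA := by
      rw [integral_finset_sum _ (fun t _ => (IntY t).abs)]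
      rw [Finset.sum_congr rfl (fun t _ => EabsY t), Finset.sum_const, hcard1, nsmul_eq_mul]
    have hsum2 : ∫ ω, (∑ t ∈ B2, |Y t ω|) ∂ℙ = (kk n : ℝ) * EA := by
      rw [integral_finset_sum _ (fun t _ => (IntY t).abs)]
      rw [Finset.sum_congr rfl (fun t _ => EabsY t), Finset.sum_const, hcard2, nsmul_eq_mul]
    have hD1val : ∫ ω, |D1 ω| ∂ℙ = err1 n := by
      simp only [herr1def, hD1, hS1, hB1]
    have hD2val : ∫ ω, |D2 ω| ∂ℙ = err2 n := by
      simp only [herr2def, hD2, hS2, hB2]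
    have hHval : ∫ ω, H ω ∂ℙ = δ n * ((qq n:ℝ)⁻¹ * ((mm n:ℝ) * EA))
        + δ n * ((qq n:ℝ)⁻¹ * ((kk n:ℝ) * EA))
        + |C1| * err1 n + |C2| * err2 n
        + (|C1| * |(mm n:ℝ)/qq n - lp| + |C2| * |(kk n:ℝ)/qq n - (1 - lp)|) * |μY| := by
      have J2 : Integrable (fun ω => δ n * ((qq n:ℝ)⁻¹ * ∑ t ∈ B1, |Y t ω|)
          + δ n * ((qq n:ℝ)⁻¹ * ∑ t ∈ B2, |Y t ω|)) ℙ := I1.add I2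
      have J3 : Integrable (fun ω => δ n * ((qq n:ℝ)⁻¹ * ∑ t ∈ B1, |Y t ω|)
          + δ n * ((qq n:ℝ)⁻¹ * ∑ t ∈ B2, |Y t ω|) + |C1| * |D1 ω|) ℙ := J2.add I3
      have J4 : Integrable (fun ω => δ n * ((qq n:ℝ)⁻¹ * ∑ t ∈ B1, |Y t ω|)
          + δ n * ((qq n:ℝ)⁻¹ * ∑ t ∈ B2, |Y t ω|) + |C1| * |D1 ω| + |C2| * |D2 ω|) ℙ := J3.add I4
      rw [hH]
      rw [integral_add J4 I5, integral_add J3 I4, integral_add J2 I3, integral_add I1 I2]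
      rw [integral_const_mul, integral_const_mul, integral_const_mul, integral_const_mul,
        integral_const_mul, integral_const_mul, hsum1, hsum2, hD1val, hD2val]
      simp [measure_univ]
    have hfinal : δ n * ((qq n:ℝ)⁻¹ * ((mm n:ℝ) * EA)) + δ n * ((qq n:ℝ)⁻¹ * ((kk n:ℝ) * EA))
        = δ n * EA := by
      field_simp
      linear_combination δ n * EA * hmkq
    calc ∫ ω, |(qq n : ℝ)⁻¹ * ∑ t ∈ Finset.Icc (b n + 1) (b n + qq n), c n t * Y t ω - L| ∂ℙ
        ≤ ∫ ω, H ω ∂ℙ := hIle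
      _ = B n := by rw [hHval]; simp only [hBdef]; rw [← hfinal]; ring
  have hnonneg : ∀ᶠ n in atTop, 0 ≤
      ∫ ω, |(qq n : ℝ)⁻¹ * ∑ t ∈ Finset.Icc (b n + 1) (b n + qq n), c n t * Y t ω - L| ∂ℙ :=
    Filter.Eventually.of_forall fun n => integral_nonneg fun ω => abs_nonneg _
  exact squeeze_zero' hnonneg hbound hBlim

end Helpers

set_option maxHeartbeats 1000000 in
/-- limits of the denominator terms `d₃` and `d₄` in the proof of
Proposition 3. Under the break model with smooth part `v` and break of size `α` at
`t = a_n + ⌊lq⌋ + 1`, with `a_n/n → r⁰` and `q/n → 0`,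
`(1/q) ∑ (v(t/n) + α 1_{break})² ε_t⁴ → E[ε₁⁴](v(r⁰)² + α(1−l)(α+2v(r⁰)))` and
`(1/q) ∑ (v(t/n) + α 1_{break}) ε_t² → v(r⁰) + α(1−l)` in probability. -/
theorem denominator_terms_limits
    {Ω : Type*} [MeasureSpace Ω] [IsProbabilityMeasure (ℙ : Measure Ω)]
    (ε : ℕ → Ω → ℝ) (hmeas : ∀ t, Measurable (ε t))
    (hindep : iIndepFun ε ℙ)
    (hid : ∀ t, IdentDistrib (ε t) (ε 1) ℙ ℙ)
    (hvar : ∫ ω, (ε 1 ω) ^ 2 ∂ℙ = 1)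
    (hmom4 : Integrable (fun ω => (ε 1 ω) ^ 4) ℙ)
    (γ : ℝ) (hγ : γ ∈ Set.Ioo (0:ℝ) 1)
    (r : ℕ → ℝ) (hr : ∀ n, r n ∈ Set.Ioo (0:ℝ) 1)
    (a q : ℕ → ℕ)
    (ha : ∀ n, a n = ⌊r n * n⌋₊)
    (hq : ∀ n, q n = ⌊(n : ℝ) ^ γ⌋₊)
    (h_sub : ∀ n, a n + q n ≤ n)
    (v : ℝ → ℝ)
    (hv_pos : ∀ x ∈ Set.Ioc (0:ℝ) 1, 0 < v x)
    (hv_bdd : ∃ M, ∀ x ∈ Set.Ioc (0:ℝ) 1, |v x| ≤ M)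
    (hv_lip : ∃ K, LipschitzOnWith K v (Set.Ioc (0:ℝ) 1))
    (α : ℝ) (l : ℝ) (hl : l ∈ Set.Ioo (0:ℝ) 1)
    (r0 : ℝ) (hr0 : r0 ∈ Set.Ioo (0:ℝ) 1)
    (ha_lim : Tendsto (fun (n : ℕ) => (a n : ℝ) / n) atTop (nhds r0))
    (hq_lim : Tendsto (fun (n : ℕ) => (q n : ℝ) / n) atTop (nhds 0)) :
    TendstoInMeasure ℙ
      (fun (n : ℕ) ω => (q n : ℝ)⁻¹ *
        ∑ t ∈ Finset.Icc (a n + 1) (a n + q n),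
          (v ((t : ℝ) / n) + (if a n + ⌊l * (q n : ℝ)⌋₊ + 1 ≤ t then α else 0)) ^ 2 *
            (ε t ω) ^ 4)
      atTop
      (fun _ => (∫ ω, (ε 1 ω) ^ 4 ∂ℙ) *
        ((v r0) ^ 2 + α * (1 - l) * (α + 2 * v r0))) ∧
    TendstoInMeasure ℙ
      (fun (n : ℕ) ω => (q n : ℝ)⁻¹ *
        ∑ t ∈ Finset.Icc (a n + 1) (a n + q n),
          (v ((t : ℝ) / n) + (if a n + ⌊l * (q n : ℝ)⌋₊ + 1 ≤ t then α else 0)) *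
            (ε t ω) ^ 2)
      atTop (fun _ => v r0 + α * (1 - l)) := by
  obtain ⟨M, hM⟩ := hv_bdd
  obtain ⟨K, hK⟩ := hv_lip
  obtain ⟨hl0, hl1⟩ := hl
  have hM0 : 0 ≤ M := le_trans (abs_nonneg _) (hM 1 ⟨zero_lt_one, le_refl 1⟩)
  set mm : ℕ → ℕ := fun n => ⌊l * (q n : ℝ)⌋₊ with hmm
  -- basic limit facts
  have hq_inf : Tendsto q atTop atTop := by
    have h1 : Tendsto (fun n : ℕ => (n:ℝ)^γ) atTop atTop :=
      (tendsto_rpow_atTop hγ.1).comp tendsto_natCast_atTop_atTop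
    have h2 := tendsto_nat_floor_atTop.comp h1
    exact h2.congr (fun n => (hq n).symm)
  have hq_real : Tendsto (fun n => (q n : ℝ)) atTop atTop :=
    tendsto_natCast_atTop_atTop.comp hq_inf
  have hm_inf : Tendsto mm atTop atTop :=
    tendsto_nat_floor_atTop.comp (hq_real.const_mul_atTop hl0)
  have hmle : ∀ n, mm n ≤ q n := by
    intro n
    calc mm n ≤ ⌊((q n : ℕ) : ℝ)⌋₊ := Nat.floor_le_floor
          (mul_le_of_le_one_left (Nat.cast_nonneg _) hl1.le)
      _ = q n := Nat.floor_natCast _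
  have hmlq : ∀ n, (mm n : ℝ) ≤ l * q n := fun n => Nat.floor_le (by positivity)
  have hk_inf : Tendsto (fun n => q n - mm n) atTop atTop := by
    rw [← tendsto_natCast_atTop_iff (R := ℝ)]
    apply tendsto_atTop_mono (fun n => ?_)
      (tendsto_atTop_add_const_right atTop (-1) (hq_real.const_mul_atTop (by linarith : (0:ℝ) < 1 - l)))
    rw [Nat.cast_sub (hmle n)]
    have := hmlq n
    linarith
  have hfrac : Tendsto (fun n => (mm n : ℝ) / q n) atTop (𝓝 l) := by
    rw [tendsto_iff_dist_tendsto_zero]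
    apply squeeze_zero' (Filter.Eventually.of_forall fun n => dist_nonneg)
      (g := fun n => 1 / (q n : ℝ)) ?_ (tendsto_one_div_atTop_nhds_zero_nat.comp hq_inf)
    filter_upwards [hq_inf.eventually_ge_atTop 1] with n hq1
    have hq0 : (0:ℝ) < q n := by exact_mod_cast hq1
    rw [Real.dist_eq]
    have e : (mm n:ℝ)/(q n) - l = ((mm n:ℝ) - l * q n)/(q n) := by field_simp
    rw [e, abs_div, abs_of_pos hq0, div_le_div_iff₀ hq0 hq0]
    have h2 : l * q n < (mm n:ℝ) + 1 := Nat.lt_floor_add_one _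
    have h1 := hmlq n
    have : |(mm n:ℝ) - l * q n| ≤ 1 := abs_le.2 ⟨by linarith, by linarith⟩
    nlinarith [abs_nonneg ((mm n:ℝ) - l * q n)]
  -- the eta sequence
  set η : ℕ → ℝ := fun n => |(a n : ℝ)/n - r0| + ((q n : ℝ)/n + (n:ℝ)⁻¹) with hη
  clear_value η
  have hη0 : ∀ n, 0 ≤ η n := by
    intro n
    have : (0:ℝ) ≤ (q n : ℝ)/n + (n:ℝ)⁻¹ := by positivity
    have := abs_nonneg ((a n : ℝ)/n - r0)
    simp only [hη]; linarith
  have hηlim : Tendsto η atTop (𝓝 0) := by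
    have h1 : Tendsto (fun n : ℕ => |(a n : ℝ)/n - r0|) atTop (𝓝 0) := by
      have := (ha_lim.sub_const r0).abs
      simpa using this
    have h2 : Tendsto (fun n : ℕ => (q n : ℝ)/n + (n:ℝ)⁻¹) atTop (𝓝 0) := by
      have := hq_lim.add tendsto_inv_atTop_nhds_zero_nat
      simpa using this
    have h3 := h1.add h2
    rw [hη]
    simpa using h3
  -- the key Lipschitz estimate
  have hkey : ∀ᶠ n in atTop, ∀ t ∈ Finset.Icc (a n + 1) (a n + q n),
      (t:ℝ)/n ∈ Set.Ioc (0:ℝ) 1 ∧ |v ((t:ℝ)/n) - v r0| ≤ (K:ℝ) * η n := by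
    filter_upwards [eventually_ge_atTop 1] with n hn1
    intro t ht
    rw [Finset.mem_Icc] at ht
    have hn0 : (0:ℝ) < n := by exact_mod_cast hn1
    have ht1 : 1 ≤ t := by omega
    have htn : t ≤ n := le_trans ht.2 (h_sub n)
    have hmem : (t:ℝ)/n ∈ Set.Ioc (0:ℝ) 1 := by
      constructor
      · positivity
      · rw [div_le_one hn0]; exact_mod_cast htn
    refine ⟨hmem, ?_⟩
    have hr0mem : r0 ∈ Set.Ioc (0:ℝ) 1 := ⟨hr0.1, hr0.2.le⟩
    have hdist : |(t:ℝ)/n - r0| ≤ η n := by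
      have htri : |(t:ℝ)/n - r0| ≤ |(t:ℝ)/n - (a n:ℝ)/n| + |(a n:ℝ)/n - r0| := abs_sub_le _ _ _
      have h1 : |(t:ℝ)/n - (a n:ℝ)/n| ≤ (q n : ℝ)/n + (n:ℝ)⁻¹ := by
        rw [inv_eq_one_div, div_sub_div_same, abs_div, abs_of_pos hn0]
        have ha' : (a n : ℝ) ≤ t := by exact_mod_cast (by omega : a n ≤ t)
        have hb' : (t:ℝ) - a n ≤ q n := by
          have : (t:ℝ) ≤ (a n : ℝ) + q n := by exact_mod_cast ht.2
          linarith
        rw [abs_of_nonneg (by linarith)]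
        rw [← add_div, div_le_div_iff₀ hn0 hn0]
        nlinarith
      simp only [hη]
      linarith
    calc |v ((t:ℝ)/n) - v r0| = dist (v ((t:ℝ)/n)) (v r0) := (Real.dist_eq _ _).symm
      _ ≤ (K:ℝ) * dist ((t:ℝ)/n) r0 := hK.dist_le_mul _ hmem _ hr0mem
      _ ≤ (K:ℝ) * η n := by
          rw [Real.dist_eq]
          exact mul_le_mul_of_nonneg_left hdist K.coe_nonneg
  have hvbound : ∀ᶠ n in atTop, ∀ t ∈ Finset.Icc (a n + 1) (a n + q n), |v ((t:ℝ)/n)| ≤ M := by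
    filter_upwards [hkey] with n hkn t ht
    exact hM _ (hkn t ht).1
  -- random variables
  set Y4 : ℕ → Ω → ℝ := fun t ω => ε t ω ^ 4 with hY4
  set Y2 : ℕ → Ω → ℝ := fun t ω => ε t ω ^ 2 with hY2
  have hY4m : ∀ i, Measurable (Y4 i) := fun i => (hmeas i).pow_const 4
  have hY2m : ∀ i, Measurable (Y2 i) := fun i => (hmeas i).pow_const 2
  have hY4indep : iIndepFun Y4 ℙ :=
    hindep.comp (fun _ => fun x : ℝ => x ^ 4) (fun _ => measurable_id.pow_const 4)
  have hY2indep : iIndepFun Y2 ℙ :=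
    hindep.comp (fun _ => fun x : ℝ => x ^ 2) (fun _ => measurable_id.pow_const 2)
  have hY4id : ∀ i j, IdentDistrib (Y4 i) (Y4 j) ℙ ℙ := fun i j =>
    ((hid i).trans (hid j).symm).comp (measurable_id.pow_const 4)
  have hY2id : ∀ i j, IdentDistrib (Y2 i) (Y2 j) ℙ ℙ := fun i j =>
    ((hid i).trans (hid j).symm).comp (measurable_id.pow_const 2)
  have hY4int1 : Integrable (Y4 1) ℙ := hmom4
  have hY4int : Integrable (Y4 0) ℙ := (hY4id 0 1).integrable_iff.2 hY4int1
  have hY2int1 : Integrable (Y2 1) ℙ := by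
    refine (hmom4.add (integrable_const 1)).mono'
      ((hmeas 1).pow_const 2).aestronglyMeasurable ?_
    refine Filter.Eventually.of_forall fun ω => ?_
    simp only [Pi.add_apply]
    show ‖ε 1 ω ^ 2‖ ≤ ε 1 ω ^ 4 + 1
    rw [Real.norm_eq_abs, abs_of_nonneg (by positivity)]
    nlinarith [sq_nonneg (ε 1 ω ^ 2 - 1)]
  have hY2int : Integrable (Y2 0) ℙ := (hY2id 0 1).integrable_iff.2 hY2int1
  have hY4mean : ∫ ω, Y4 0 ω ∂ℙ = ∫ ω, (ε 1 ω) ^ 4 ∂ℙ := (hY4id 0 1).integral_eq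
  have hY2mean : ∫ ω, Y2 0 ω ∂ℙ = 1 := by rw [(hY2id 0 1).integral_eq]; exact hvar
  constructor
  · -- fourth moment part
    set δ1 : ℕ → ℝ := fun n => (K:ℝ) * η n * ((K:ℝ) * η n + 2*(M + |α|)) with hδ1
    clear_value δ1
    have hδ1lim : Tendsto δ1 atTop (𝓝 0) := by
      have hKη : Tendsto (fun n => (K:ℝ) * η n) atTop (𝓝 0) := by
        have := hηlim.const_mul (K:ℝ)
        simpa using this
      have := hKη.mul (hKη.add_const (2*(M + |α|)))
      rw [hδ1]
      simpa using this
    have hδ10 : ∀ n, 0 ≤ δ1 n := fun n => by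
      have h1 : 0 ≤ (K:ℝ) * η n := mul_nonneg K.coe_nonneg (hη0 n)
      have h2 : 0 ≤ M + |α| := by positivity
      simp only [hδ1]; nlinarith
    have hc1 : ∀ᶠ n in atTop, ∀ t ∈ Finset.Icc (a n + 1) (a n + mm n),
        |(v ((t : ℝ) / n) + (if a n + mm n + 1 ≤ t then α else 0)) ^ 2 - (v r0)^2| ≤ δ1 n := by
      filter_upwards [hkey, hvbound] with n hkn hvn
      intro t ht
      rw [Finset.mem_Icc] at ht
      have ht' : t ∈ Finset.Icc (a n + 1) (a n + q n) := by
        rw [Finset.mem_Icc]; exact ⟨ht.1, le_trans ht.2 (by have := hmle n; omega)⟩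
      have hite : (if a n + mm n + 1 ≤ t then α else 0) = 0 := if_neg (by omega)
      rw [hite, add_zero]
      have h1 := (hkn t ht').2
      have h2 := hvn t ht'
      have h3 : |v r0| ≤ M := hM _ ⟨hr0.1, hr0.2.le⟩
      have e : v ((t:ℝ)/n) ^ 2 - (v r0)^2 = (v ((t:ℝ)/n) - v r0) * (v ((t:ℝ)/n) + v r0) := by ring
      rw [e, abs_mul]
      have h4 : |v ((t:ℝ)/n) + v r0| ≤ (K:ℝ) * η n + 2*(M + |α|) := by
        have t0 := abs_add_le (v ((t:ℝ)/n)) (v r0)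
        have h5 : 0 ≤ (K:ℝ) * η n := mul_nonneg K.coe_nonneg (hη0 n)
        have h6 : 0 ≤ |α| := abs_nonneg α
        linarith only [t0, h2, h3, h5, h6]
      simp only [hδ1]
      exact mul_le_mul h1 h4 (abs_nonneg _) (mul_nonneg K.coe_nonneg (hη0 n))
    have hc2 : ∀ᶠ n in atTop, ∀ t ∈ Finset.Icc (a n + mm n + 1) (a n + q n),
        |(v ((t : ℝ) / n) + (if a n + mm n + 1 ≤ t then α else 0)) ^ 2 - (v r0 + α)^2| ≤ δ1 n := by
      filter_upwards [hkey, hvbound] with n hkn hvn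
      intro t ht
      rw [Finset.mem_Icc] at ht
      have ht' : t ∈ Finset.Icc (a n + 1) (a n + q n) := by
        rw [Finset.mem_Icc]; exact ⟨by omega, ht.2⟩
      have hite : (if a n + mm n + 1 ≤ t then α else 0) = α := if_pos (by omega)
      rw [hite]
      have h1 := (hkn t ht').2
      have h2 := hvn t ht'
      have h3 : |v r0| ≤ M := hM _ ⟨hr0.1, hr0.2.le⟩
      have e : (v ((t:ℝ)/n) + α) ^ 2 - (v r0 + α)^2
          = (v ((t:ℝ)/n) - v r0) * (v ((t:ℝ)/n) + v r0 + 2*α) := by ring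
      rw [e, abs_mul]
      have h4 : |v ((t:ℝ)/n) + v r0 + 2*α| ≤ (K:ℝ) * η n + 2*(M + |α|) := by
        have t1 : |v ((t:ℝ)/n) + v r0 + 2*α| ≤ |v ((t:ℝ)/n)| + |v r0| + |2*α| :=
          (abs_add_le _ _).trans (add_le_add (abs_add_le _ _) le_rfl)
        have t2 : |2*α| = 2*|α| := by rw [abs_mul]; simp
        have h5 : 0 ≤ (K:ℝ) * η n := mul_nonneg K.coe_nonneg (hη0 n)
        linarith only [t1, t2, h2, h3, h5]
      simp only [hδ1]
      exact mul_le_mul h1 h4 (abs_nonneg _) (mul_nonneg K.coe_nonneg (hη0 n))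
    have hmaster := master Y4 hY4m hY4indep hY4id hY4int a q mm
      (fun n t => (v ((t : ℝ) / n) + (if a n + mm n + 1 ≤ t then α else 0)) ^ 2)
      ((v r0)^2) ((v r0 + α)^2) l δ1 hmle hq_inf hm_inf hk_inf hfrac hδ1lim hδ10 hc1 hc2
    have hLeq : (l * (v r0)^2 + (1 - l) * (v r0 + α)^2) * ∫ ω, Y4 0 ω ∂ℙ
        = (∫ ω, (ε 1 ω) ^ 4 ∂ℙ) * ((v r0) ^ 2 + α * (1 - l) * (α + 2 * v r0)) := by
      rw [hY4mean]; ring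
    rw [← hLeq]
    exact hmaster
  · -- second moment part
    set δ2 : ℕ → ℝ := fun n => (K:ℝ) * η n with hδ2
    clear_value δ2
    have hδ2lim : Tendsto δ2 atTop (𝓝 0) := by
      have := hηlim.const_mul (K:ℝ)
      rw [hδ2]
      simpa using this
    have hδ20 : ∀ n, 0 ≤ δ2 n := fun n => by
      simp only [hδ2]; exact mul_nonneg K.coe_nonneg (hη0 n)
    have hc1 : ∀ᶠ n in atTop, ∀ t ∈ Finset.Icc (a n + 1) (a n + mm n),
        |(v ((t : ℝ) / n) + (if a n + mm n + 1 ≤ t then α else 0)) - v r0| ≤ δ2 n := by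
      filter_upwards [hkey] with n hkn
      intro t ht
      rw [Finset.mem_Icc] at ht
      have ht' : t ∈ Finset.Icc (a n + 1) (a n + q n) := by
        rw [Finset.mem_Icc]; exact ⟨ht.1, le_trans ht.2 (by have := hmle n; omega)⟩
      have hite : (if a n + mm n + 1 ≤ t then α else 0) = 0 := if_neg (by omega)
      rw [hite, add_zero]
      simp only [hδ2]
      exact (hkn t ht').2
    have hc2 : ∀ᶠ n in atTop, ∀ t ∈ Finset.Icc (a n + mm n + 1) (a n + q n),
        |(v ((t : ℝ) / n) + (if a n + mm n + 1 ≤ t then α else 0)) - (v r0 + α)| ≤ δ2 n := by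
      filter_upwards [hkey] with n hkn
      intro t ht
      rw [Finset.mem_Icc] at ht
      have ht' : t ∈ Finset.Icc (a n + 1) (a n + q n) := by
        rw [Finset.mem_Icc]; exact ⟨by omega, ht.2⟩
      have hite : (if a n + mm n + 1 ≤ t then α else 0) = α := if_pos (by omega)
      rw [hite]
      have := (hkn t ht').2
      calc |v ((t:ℝ)/n) + α - (v r0 + α)| = |v ((t:ℝ)/n) - v r0| := by ring_nf
        _ ≤ δ2 n := by simp only [hδ2]; exact this
    have hmaster := master Y2 hY2m hY2indep hY2id hY2int a q mm
      (fun n t => (v ((t : ℝ) / n) + (if a n + mm n + 1 ≤ t then α else 0)))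
      (v r0) (v r0 + α) l δ2 hmle hq_inf hm_inf hk_inf hfrac hδ2lim hδ20 hc1 hc2
    have hLeq : (l * (v r0) + (1 - l) * (v r0 + α)) * ∫ ω, Y2 0 ω ∂ℙ
        = v r0 + α * (1 - l) := by
      rw [hY2mean]; ring
    rw [← hLeq]
    exact hmaster
end
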